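/- arXiv:1907.01270 — 3 statements merged into one kernel-verified Lean document; each statement's English description precedes it below -/
import Mathlib

section
/- (Adequacy of LNS_Kt) For every formula φ built from atoms, ⊥, →, □, ■: the linear nested sequent ε ⇒ φ is derivable in LNS_Kt if and only if φ is valid (forced at every world of every Kripke model). -/
/-- Formulae of tense logic: atoms (indexed by naturals), ⊥, →, □, ◇, ■, ◆. -/
inductive Formula : Type
  | atom : ℕ → Formula
  | bot : Formula
  | imp : Formula → Formula → Formula
  | box : Formula → Formula
  | dia : Formula → Formula
  | bbox : Formula → Formula
  | bdia : Formula → Formula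

def Formula.neg (A : Formula) : Formula := A.imp .bot
def Formula.and (A B : Formula) : Formula := (A.imp B.neg).neg
def Formula.or (A B : Formula) : Formula := A.neg.imp B
def Formula.top : Formula := Formula.bot.imp .bot

/-- Formulas built from atoms, ⊥, →, □, ■ only (no diamonds). -/
def Formula.NoDia : Formula → Prop
  | .atom _ => True
  | .bot => True
  | .imp A B => A.NoDia ∧ B.NoDia
  | .box A => A.NoDia
  | .dia _ => False
  | .bbox A => A.NoDia
  | .bdia _ => False

/-- Structural connectives: `up` is ↗ and `dn` is ↙. -/
inductive Dir : Type
  | up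
  | dn

/-- Linear nested sequents: a nonempty list of components `Γ ⇒ Δ`
joined by the structural connectives ↗ (`up`) and ↙ (`dn`). -/
inductive LNS : Type
  | single (Γ Δ : Multiset Formula) : LNS
  | up (Γ Δ : Multiset Formula) (S : LNS) : LNS
  | dn (Γ Δ : Multiset Formula) (S : LNS) : LNS

/-- A (possibly empty) context: a list of components, each together with the
structural connective joining it to what follows. -/
abbrev Ctx := List (Multiset Formula × Multiset Formula × Dir)

/-- `plug G S` is the linear nested sequent `G ⇗ S` (just `S` when `G` is empty). -/
def plug : Ctx → LNS → LNS
  | [], S => S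
  | (Γ, Δ, Dir.up) :: G, S => LNS.up Γ Δ (plug G S)
  | (Γ, Δ, Dir.dn) :: G, S => LNS.dn Γ Δ (plug G S)

/-- The structural connective joining the context to what follows it (none if empty). -/
def lastDir : Ctx → Option Dir
  | [] => none
  | [(_, _, d)] => some d
  | _ :: G => lastDir G

/-- Kripke forcing for tense logic. -/
def Force {W : Type} (R : W → W → Prop) (V : W → ℕ → Prop) : W → Formula → Prop
  | w, .atom p => V w p
  | _, .bot => False
  | w, .imp A B => Force R V w A → Force R V w B
  | w, .box A => ∀ v, R w v → Force R V v A
  | w, .dia A => ∃ v, R w v ∧ Force R V v A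
  | w, .bbox A => ∀ v, R v w → Force R V v A
  | w, .bdia A => ∃ v, R v w ∧ Force R V v A

/-- Conjunction of a finite multiset of formulae (empty conjunction is ⊤). -/
noncomputable def bigAnd (Γ : Multiset Formula) : Formula :=
  Γ.toList.foldr Formula.and Formula.top

/-- Disjunction of a finite multiset of formulae (empty disjunction is ⊥). -/
noncomputable def bigOr (Δ : Multiset Formula) : Formula :=
  Δ.toList.foldr Formula.or Formula.bot

/-- The formula translation τ of a linear nested sequent. -/
noncomputable def tau : LNS → Formula
  | .single Γ Δ => (bigAnd Γ).imp (bigOr Δ)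
  | .up Γ Δ S => (bigAnd Γ).imp ((bigOr Δ).or (tau S).box)
  | .dn Γ Δ S => (bigAnd Γ).imp ((bigOr Δ).or (tau S).bbox)

/-- A formula is valid if it is forced at every world of every Kripke model. -/
def Valid (A : Formula) : Prop :=
  ∀ (W : Type) (_ : Nonempty W) (R : W → W → Prop) (V : W → ℕ → Prop) (w : W),
    Force R V w A

/-- A linear nested sequent is falsifiable if its formula translation fails at
some world of some Kripke model. -/
def Falsifiable (S : LNS) : Prop :=
  ∃ (W : Type) (_ : Nonempty W) (R : W → W → Prop) (V : W → ℕ → Prop) (w : W),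
    ¬ Force R V w (tau S)

/-- The calculus LNS_Kt. -/
inductive Deriv : LNS → Prop
  | id (G : Ctx) (Γ Δ : Multiset Formula) (p : ℕ) :
      Deriv (plug G (.single (.atom p ::ₘ Γ) (.atom p ::ₘ Δ)))
  | botL (G : Ctx) (Γ Δ : Multiset Formula) :
      Deriv (plug G (.single (.bot ::ₘ Γ) Δ))
  | ew (G : Ctx) (Θ Λ : Multiset Formula) (d : Dir) (Γ Δ : Multiset Formula) :
      Deriv (plug G (.single Θ Λ)) →
      Deriv (plug (G ++ [(Θ, Λ, d)]) (.single Γ Δ))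
  | impR (G : Ctx) (Γ Δ : Multiset Formula) (A B : Formula) :
      Deriv (plug G (.single (A ::ₘ Γ) (B ::ₘ A.imp B ::ₘ Δ))) →
      Deriv (plug G (.single Γ (A.imp B ::ₘ Δ)))
  | impL (G : Ctx) (Γ Δ : Multiset Formula) (A B : Formula) :
      Deriv (plug G (.single (B ::ₘ A.imp B ::ₘ Γ) Δ)) →
      Deriv (plug G (.single (A.imp B ::ₘ Γ) (A ::ₘ Δ))) →
      Deriv (plug G (.single (A.imp B ::ₘ Γ) Δ))
  | boxR1 (G : Ctx) (Γ Δ Θ Λ : Multiset Formula) (A : Formula) :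
      Deriv (plug G (.dn Γ (A ::ₘ Δ) (.single Θ (A.box ::ₘ Λ)))) →
      Deriv (plug G (.dn Γ Δ (.up Θ (A.box ::ₘ Λ) (.single 0 {A})))) →
      Deriv (plug G (.dn Γ Δ (.single Θ (A.box ::ₘ Λ))))
  | bboxR1 (G : Ctx) (Γ Δ Θ Λ : Multiset Formula) (A : Formula) :
      Deriv (plug G (.up Γ (A ::ₘ Δ) (.single Θ (A.bbox ::ₘ Λ)))) →
      Deriv (plug G (.up Γ Δ (.dn Θ (A.bbox ::ₘ Λ) (.single 0 {A})))) →
      Deriv (plug G (.up Γ Δ (.single Θ (A.bbox ::ₘ Λ))))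
  | boxR2 (G : Ctx) (Γ Δ : Multiset Formula) (A : Formula) :
      lastDir G ≠ some Dir.dn →
      Deriv (plug G (.up Γ (A.box ::ₘ Δ) (.single 0 {A}))) →
      Deriv (plug G (.single Γ (A.box ::ₘ Δ)))
  | bboxR2 (G : Ctx) (Γ Δ : Multiset Formula) (A : Formula) :
      lastDir G ≠ some Dir.up →
      Deriv (plug G (.dn Γ (A.bbox ::ₘ Δ) (.single 0 {A}))) →
      Deriv (plug G (.single Γ (A.bbox ::ₘ Δ)))
  | boxL1 (G : Ctx) (Γ Δ Θ Λ : Multiset Formula) (A : Formula) :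
      Deriv (plug G (.up (A.box ::ₘ Γ) Δ (.single (A ::ₘ Θ) Λ))) →
      Deriv (plug G (.up (A.box ::ₘ Γ) Δ (.single Θ Λ)))
  | bboxL1 (G : Ctx) (Γ Δ Θ Λ : Multiset Formula) (A : Formula) :
      Deriv (plug G (.dn (A.bbox ::ₘ Γ) Δ (.single (A ::ₘ Θ) Λ))) →
      Deriv (plug G (.dn (A.bbox ::ₘ Γ) Δ (.single Θ Λ)))
  | boxL2 (G : Ctx) (Γ Δ Θ Λ : Multiset Formula) (A : Formula) :
      Deriv (plug G (.single (A ::ₘ Γ) Δ)) →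
      Deriv (plug G (.dn Γ Δ (.single (A.box ::ₘ Θ) Λ)))
  | bboxL2 (G : Ctx) (Γ Δ Θ Λ : Multiset Formula) (A : Formula) :
      Deriv (plug G (.single (A ::ₘ Γ) Δ)) →
      Deriv (plug G (.up Γ Δ (.single (A.bbox ::ₘ Θ) Λ)))

section Soundness

variable {W : Type} {R : W → W → Prop} {V : W → ℕ → Prop}

lemma force_neg {w : W} {A : Formula} :
    Force R V w A.neg ↔ ¬ Force R V w A := by
  simp only [Formula.neg, Force]

lemma force_and {w : W} {A B : Formula} :
    Force R V w (A.and B) ↔ Force R V w A ∧ Force R V w B := by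
  simp only [Formula.and, Formula.neg, Force]; tauto

lemma force_or {w : W} {A B : Formula} :
    Force R V w (A.or B) ↔ Force R V w A ∨ Force R V w B := by
  simp only [Formula.or, Formula.neg, Force]; tauto

lemma force_top {w : W} : Force R V w Formula.top := by
  simp only [Formula.top, Force]; exact id

lemma force_bigAnd {w : W} {Γ : Multiset Formula} :
    Force R V w (bigAnd Γ) ↔ ∀ A ∈ Γ, Force R V w A := by
  have : ∀ l : List Formula,
      Force R V w (l.foldr Formula.and Formula.top) ↔ ∀ A ∈ l, Force R V w A := by
    intro l
    induction l with
    | nil => simpa using force_top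
    | cons B l ih =>
      simp only [List.foldr, force_and, List.mem_cons, ih]
      constructor
      · rintro ⟨h1, h2⟩ A (rfl | hA)
        · exact h1
        · exact h2 _ hA
      · intro h; exact ⟨h _ (Or.inl rfl), fun A hA => h _ (Or.inr hA)⟩
  rw [bigAnd, this]
  constructor
  · intro h A hA; exact h A (by rwa [Multiset.mem_toList])
  · intro h A hA; exact h A (by rwa [← Multiset.mem_toList])

lemma force_bigOr {w : W} {Δ : Multiset Formula} :
    Force R V w (bigOr Δ) ↔ ∃ A ∈ Δ, Force R V w A := by
  have : ∀ l : List Formula,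
      Force R V w (l.foldr Formula.or Formula.bot) ↔ ∃ A ∈ l, Force R V w A := by
    intro l
    induction l with
    | nil => simp [Force]
    | cons B l ih =>
      simp only [List.foldr, force_or, List.mem_cons, ih]
      constructor
      · rintro (h | ⟨A, hA, h⟩)
        · exact ⟨B, Or.inl rfl, h⟩
        · exact ⟨A, Or.inr hA, h⟩
      · rintro ⟨A, (rfl | hA), h⟩
        · exact Or.inl h
        · exact Or.inr ⟨A, hA, h⟩
  rw [bigOr, this]
  constructor
  · rintro ⟨A, hA, h⟩; exact ⟨A, by rwa [← Multiset.mem_toList], h⟩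
  · rintro ⟨A, hA, h⟩; exact ⟨A, by rwa [Multiset.mem_toList], h⟩

lemma plug_append (G H : Ctx) (S : LNS) : plug (G ++ H) S = plug G (plug H S) := by
  induction G with
  | nil => rfl
  | cons a G ih =>
    obtain ⟨Γ, Δ, d⟩ := a
    cases d <;> simp [plug, ih]

/-- validity of an LNS, at every world of every model -/
def SatL (S : LNS) : Prop := ∀ (W : Type) (R : W → W → Prop) (V : W → ℕ → Prop) (w : W),
  Force R V w (tau S)

lemma plug_mono1 {S1 S0 : LNS}
    (h : ∀ (W : Type) (R : W → W → Prop) (V : W → ℕ → Prop) (w : W),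
      Force R V w (tau S1) → Force R V w (tau S0)) :
    ∀ (G : Ctx) (W : Type) (R : W → W → Prop) (V : W → ℕ → Prop) (w : W),
      Force R V w (tau (plug G S1)) → Force R V w (tau (plug G S0)) := by
  intro G
  induction G with
  | nil => exact h
  | cons a G ih =>
    obtain ⟨Γ, Δ, d⟩ := a
    intro W R V w
    cases d <;>
    · simp only [plug, tau]
      intro h1 hΓ
      rcases force_or.mp (h1 hΓ) with h2 | h2
      · exact force_or.mpr (Or.inl h2)
      · refine force_or.mpr (Or.inr ?_)
        intro v hv
        exact ih W R V v (h2 v hv)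

lemma plug_mono2 {S1 S2 S0 : LNS}
    (h : ∀ (W : Type) (R : W → W → Prop) (V : W → ℕ → Prop) (w : W),
      Force R V w (tau S1) → Force R V w (tau S2) → Force R V w (tau S0)) :
    ∀ (G : Ctx) (W : Type) (R : W → W → Prop) (V : W → ℕ → Prop) (w : W),
      Force R V w (tau (plug G S1)) → Force R V w (tau (plug G S2)) →
        Force R V w (tau (plug G S0)) := by
  intro G
  induction G with
  | nil => exact h
  | cons a G ih =>
    obtain ⟨Γ, Δ, d⟩ := a
    intro W R V w
    cases d <;>
    · simp only [plug, tau]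
      intro h1 h2 hΓ
      rcases force_or.mp (h1 hΓ) with h1' | h1'
      · exact force_or.mpr (Or.inl h1')
      rcases force_or.mp (h2 hΓ) with h2' | h2'
      · exact force_or.mpr (Or.inl h2')
      refine force_or.mpr (Or.inr ?_)
      intro v hv
      exact ih W R V v (h1' v hv) (h2' v hv)

end Soundness
section Soundness2

lemma plug_mono0 {S0 : LNS}
    (h : ∀ (W : Type) (R : W → W → Prop) (V : W → ℕ → Prop) (w : W), Force R V w (tau S0)) :
    ∀ (G : Ctx) (W : Type) (R : W → W → Prop) (V : W → ℕ → Prop) (w : W),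
      Force R V w (tau (plug G S0)) := by
  intro G
  induction G with
  | nil => exact h
  | cons a G ih =>
    obtain ⟨Γ, Δ, d⟩ := a
    intro W R V w
    cases d <;>
    · simp only [plug, tau]
      intro hΓ
      refine force_or.mpr (Or.inr ?_)
      intro v hv
      exact ih W R V v

lemma force_single_seed {W : Type} {R : W → W → Prop} {V : W → ℕ → Prop} {v : W} {A : Formula}
    (h : Force R V v (tau (.single 0 {A}))) : Force R V v A := by
  have h2 := h (force_bigAnd.mpr (by intro B hB; simp at hB))
  rcases force_bigOr.mp h2 with ⟨B, hB, hBf⟩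
  rw [Multiset.mem_singleton] at hB
  subst hB
  exact hBf

theorem deriv_sound {S : LNS} (h : Deriv S) :
    ∀ (W : Type) (R : W → W → Prop) (V : W → ℕ → Prop) (w : W), Force R V w (tau S) := by
  induction h with
  | id G Γ Δ p =>
    refine plug_mono0 ?_ G
    intro W R V w
    simp only [tau]
    intro hΓ
    exact force_bigOr.mpr ⟨.atom p, Multiset.mem_cons_self _ _,
      force_bigAnd.mp hΓ _ (Multiset.mem_cons_self _ _)⟩
  | botL G Γ Δ =>
    refine plug_mono0 ?_ G
    intro W R V w
    simp only [tau]
    intro hΓ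
    exact absurd (force_bigAnd.mp hΓ _ (Multiset.mem_cons_self _ _)) (by simp [Force])
  | ew G Θ Λ d Γ Δ _ ih =>
    rw [plug_append]
    intro W0 R0 V0 w0
    refine plug_mono1 ?_ G W0 R0 V0 w0 (ih W0 R0 V0 w0)
    intro W R V w h1
    cases d <;>
    · simp only [plug, tau]
      intro hΘ
      exact force_or.mpr (Or.inl (h1 hΘ))
  | impR G Γ Δ A B _ ih =>
    intro W0 R0 V0 w0
    refine plug_mono1 ?_ G W0 R0 V0 w0 (ih W0 R0 V0 w0)
    intro W R V w h1
    simp only [tau] at h1 ⊢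
    intro hΓ
    by_cases hA : Force R V w A
    · have h2 := h1 (force_bigAnd.mpr ?_)
      · rcases force_bigOr.mp h2 with ⟨C, hC, hCf⟩
        rcases Multiset.mem_cons.mp hC with hCB | hC
        · rw [hCB] at hCf
          exact force_bigOr.mpr ⟨A.imp B, Multiset.mem_cons_self _ _, fun _ => hCf⟩
        · exact force_bigOr.mpr ⟨C, hC, hCf⟩
      · intro C hC
        rcases Multiset.mem_cons.mp hC with rfl | hC
        · exact hA
        · exact force_bigAnd.mp hΓ _ hC
    · refine force_bigOr.mpr ⟨A.imp B, Multiset.mem_cons_self _ _, ?_⟩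
      intro hA'
      exact absurd hA' hA
  | impL G Γ Δ A B _ _ ih1 ih2 =>
    intro W0 R0 V0 w0
    refine plug_mono2 ?_ G W0 R0 V0 w0 (ih1 W0 R0 V0 w0) (ih2 W0 R0 V0 w0)
    intro W R V w h1 h2
    simp only [tau] at h1 h2 ⊢
    intro hΓ
    have himp : Force R V w (A.imp B) := force_bigAnd.mp hΓ _ (Multiset.mem_cons_self _ _)
    rcases force_bigOr.mp (h2 hΓ) with ⟨C, hC, hCf⟩
    rcases Multiset.mem_cons.mp hC with hCA | hC
    · rw [hCA] at hCf
      refine h1 (force_bigAnd.mpr ?_)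
      intro D hD
      rcases Multiset.mem_cons.mp hD with rfl | hD
      · exact himp hCf
      · exact force_bigAnd.mp hΓ _ hD
    · exact force_bigOr.mpr ⟨C, hC, hCf⟩
  | boxR1 G Γ Δ Θ Λ A _ _ ih1 ih2 =>
    intro W0 R0 V0 w0
    refine plug_mono1 ?_ G W0 R0 V0 w0 (ih2 W0 R0 V0 w0)
    intro W R V w h1
    simp only [tau] at h1 ⊢
    intro hΓ
    rcases force_or.mp (h1 hΓ) with h | h
    · exact force_or.mpr (Or.inl h)
    refine force_or.mpr (Or.inr ?_)
    intro v hv hΘ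
    rcases force_or.mp (h v hv hΘ) with h2 | h2
    · exact h2
    · refine force_bigOr.mpr ⟨A.box, Multiset.mem_cons_self _ _, ?_⟩
      intro u hu
      exact force_single_seed (h2 u hu)
  | bboxR1 G Γ Δ Θ Λ A _ _ ih1 ih2 =>
    intro W0 R0 V0 w0
    refine plug_mono1 ?_ G W0 R0 V0 w0 (ih2 W0 R0 V0 w0)
    intro W R V w h1
    simp only [tau] at h1 ⊢
    intro hΓ
    rcases force_or.mp (h1 hΓ) with h | h
    · exact force_or.mpr (Or.inl h)
    refine force_or.mpr (Or.inr ?_)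
    intro v hv hΘ
    rcases force_or.mp (h v hv hΘ) with h2 | h2
    · exact h2
    · refine force_bigOr.mpr ⟨A.bbox, Multiset.mem_cons_self _ _, ?_⟩
      intro u hu
      exact force_single_seed (h2 u hu)
  | boxR2 G Γ Δ A _ _ ih =>
    intro W0 R0 V0 w0
    refine plug_mono1 ?_ G W0 R0 V0 w0 (ih W0 R0 V0 w0)
    intro W R V w h1
    simp only [tau] at h1 ⊢
    intro hΓ
    rcases force_or.mp (h1 hΓ) with h | h
    · exact h
    · refine force_bigOr.mpr ⟨A.box, Multiset.mem_cons_self _ _, ?_⟩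
      intro u hu
      exact force_single_seed (h u hu)
  | bboxR2 G Γ Δ A _ _ ih =>
    intro W0 R0 V0 w0
    refine plug_mono1 ?_ G W0 R0 V0 w0 (ih W0 R0 V0 w0)
    intro W R V w h1
    simp only [tau] at h1 ⊢
    intro hΓ
    rcases force_or.mp (h1 hΓ) with h | h
    · exact h
    · refine force_bigOr.mpr ⟨A.bbox, Multiset.mem_cons_self _ _, ?_⟩
      intro u hu
      exact force_single_seed (h u hu)
  | boxL1 G Γ Δ Θ Λ A _ ih =>
    intro W0 R0 V0 w0
    refine plug_mono1 ?_ G W0 R0 V0 w0 (ih W0 R0 V0 w0)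
    intro W R V w h1
    simp only [tau] at h1 ⊢
    intro hΓ
    rcases force_or.mp (h1 hΓ) with h | h
    · exact force_or.mpr (Or.inl h)
    refine force_or.mpr (Or.inr ?_)
    intro v hv hΘ
    refine h v hv (force_bigAnd.mpr ?_)
    intro C hC
    rcases Multiset.mem_cons.mp hC with rfl | hC
    · exact force_bigAnd.mp hΓ _ (Multiset.mem_cons_self _ _) v hv
    · exact force_bigAnd.mp hΘ _ hC
  | bboxL1 G Γ Δ Θ Λ A _ ih =>
    intro W0 R0 V0 w0
    refine plug_mono1 ?_ G W0 R0 V0 w0 (ih W0 R0 V0 w0)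
    intro W R V w h1
    simp only [tau] at h1 ⊢
    intro hΓ
    rcases force_or.mp (h1 hΓ) with h | h
    · exact force_or.mpr (Or.inl h)
    refine force_or.mpr (Or.inr ?_)
    intro v hv hΘ
    refine h v hv (force_bigAnd.mpr ?_)
    intro C hC
    rcases Multiset.mem_cons.mp hC with rfl | hC
    · exact force_bigAnd.mp hΓ _ (Multiset.mem_cons_self _ _) v hv
    · exact force_bigAnd.mp hΘ _ hC
  | boxL2 G Γ Δ Θ Λ A _ ih =>
    intro W0 R0 V0 w0
    refine plug_mono1 ?_ G W0 R0 V0 w0 (ih W0 R0 V0 w0)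
    intro W R V w h1
    simp only [tau] at h1 ⊢
    intro hΓ
    by_cases hΔ : Force R V w (bigOr Δ)
    · exact force_or.mpr (Or.inl hΔ)
    refine force_or.mpr (Or.inr ?_)
    intro v hv hc
    exfalso
    refine hΔ (h1 (force_bigAnd.mpr ?_))
    intro C hC
    rcases Multiset.mem_cons.mp hC with rfl | hC
    · exact force_bigAnd.mp hc _ (Multiset.mem_cons_self _ _) w hv
    · exact force_bigAnd.mp hΓ _ hC
  | bboxL2 G Γ Δ Θ Λ A _ ih =>
    intro W0 R0 V0 w0
    refine plug_mono1 ?_ G W0 R0 V0 w0 (ih W0 R0 V0 w0)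
    intro W R V w h1
    simp only [tau] at h1 ⊢
    intro hΓ
    by_cases hΔ : Force R V w (bigOr Δ)
    · exact force_or.mpr (Or.inl hΔ)
    refine force_or.mpr (Or.inr ?_)
    intro v hv hc
    exfalso
    refine hΔ (h1 (force_bigAnd.mpr ?_))
    intro C hC
    rcases Multiset.mem_cons.mp hC with rfl | hC
    · exact force_bigAnd.mp hc _ (Multiset.mem_cons_self _ _) w hv
    · exact force_bigAnd.mp hΓ _ hC

end Soundness2
section Infra

deriving instance DecidableEq for Formula
deriving instance DecidableEq for Dir

/-- modal depth -/
def Formula.mdepth : Formula → ℕ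
  | .atom _ => 0
  | .bot => 0
  | .imp A B => max A.mdepth B.mdepth
  | .box A => A.mdepth + 1
  | .dia A => A.mdepth + 1
  | .bbox A => A.mdepth + 1
  | .bdia A => A.mdepth + 1

/-- subformulas -/
def Formula.subf : Formula → Finset Formula
  | .atom p => {.atom p}
  | .bot => {.bot}
  | .imp A B => insert (A.imp B) (A.subf ∪ B.subf)
  | .box A => insert A.box A.subf
  | .dia A => insert A.dia A.subf
  | .bbox A => insert A.bbox A.subf
  | .bdia A => insert A.bdia A.subf

lemma Formula.mem_subf_self : ∀ A : Formula, A ∈ A.subf := by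
  intro A
  cases A <;> simp [Formula.subf]

lemma Formula.subf_subset : ∀ A B : Formula, B ∈ A.subf → B.subf ⊆ A.subf := by
  intro A
  induction A with
  | atom p => intro B hB; simp [Formula.subf] at hB; subst hB; exact fun x hx => hx
  | bot => intro B hB; simp [Formula.subf] at hB; subst hB; exact fun x hx => hx
  | imp A1 A2 ih1 ih2 =>
    intro B hB
    rw [Formula.subf] at hB
    rcases Finset.mem_insert.mp hB with rfl | hB
    · exact fun x hx => hx
    · rcases Finset.mem_union.mp hB with hB | hB
      · exact fun x hx => by
          rw [Formula.subf]
          exact Finset.mem_insert_of_mem (Finset.mem_union_left _ (ih1 B hB hx))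
      · exact fun x hx => by
          rw [Formula.subf]
          exact Finset.mem_insert_of_mem (Finset.mem_union_right _ (ih2 B hB hx))
  | box A ih =>
    intro B hB
    rw [Formula.subf] at hB
    rcases Finset.mem_insert.mp hB with rfl | hB
    · exact fun x hx => hx
    · exact fun x hx => by
        rw [Formula.subf]; exact Finset.mem_insert_of_mem (ih B hB hx)
  | dia A ih =>
    intro B hB
    rw [Formula.subf] at hB
    rcases Finset.mem_insert.mp hB with rfl | hB
    · exact fun x hx => hx
    · exact fun x hx => by
        rw [Formula.subf]; exact Finset.mem_insert_of_mem (ih B hB hx)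
  | bbox A ih =>
    intro B hB
    rw [Formula.subf] at hB
    rcases Finset.mem_insert.mp hB with rfl | hB
    · exact fun x hx => hx
    · exact fun x hx => by
        rw [Formula.subf]; exact Finset.mem_insert_of_mem (ih B hB hx)
  | bdia A ih =>
    intro B hB
    rw [Formula.subf] at hB
    rcases Finset.mem_insert.mp hB with rfl | hB
    · exact fun x hx => hx
    · exact fun x hx => by
        rw [Formula.subf]; exact Finset.mem_insert_of_mem (ih B hB hx)

lemma Formula.noDia_of_subf : ∀ A B : Formula, A.NoDia → B ∈ A.subf → B.NoDia := by
  intro A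
  induction A with
  | atom p => intro B h hB; simp [Formula.subf] at hB; subst hB; exact h
  | bot => intro B h hB; simp [Formula.subf] at hB; subst hB; exact h
  | imp A1 A2 ih1 ih2 =>
    intro B h hB
    rw [Formula.subf] at hB
    rcases Finset.mem_insert.mp hB with rfl | hB
    · exact h
    · rcases Finset.mem_union.mp hB with hB | hB
      · exact ih1 B h.1 hB
      · exact ih2 B h.2 hB
  | box A ih =>
    intro B h hB
    rw [Formula.subf] at hB
    rcases Finset.mem_insert.mp hB with rfl | hB
    · exact h
    · exact ih B h hB
  | dia A ih => intro B h hB; exact absurd h (by simp [Formula.NoDia])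
  | bbox A ih =>
    intro B h hB
    rw [Formula.subf] at hB
    rcases Finset.mem_insert.mp hB with rfl | hB
    · exact h
    · exact ih B h hB
  | bdia A ih => intro B h hB; exact absurd h (by simp [Formula.NoDia])

/-- capacity measure relative to a finite closure set -/
def capM (Cl : Finset Formula) (Γ Δ : Multiset Formula) : ℕ :=
  (Cl.card - (Γ.toFinset ∩ Cl).card) + (Cl.card - (Δ.toFinset ∩ Cl).card)

lemma inter_card_le (Cl : Finset Formula) (Γ : Multiset Formula) :
    (Γ.toFinset ∩ Cl).card ≤ Cl.card :=
  Finset.card_le_card (Finset.inter_subset_right)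

lemma inter_card_cons (Cl : Finset Formula) (Γ : Multiset Formula) {C : Formula}
    (hC : C ∈ Cl) (hn : C ∉ Γ) :
    ((C ::ₘ Γ).toFinset ∩ Cl).card = (Γ.toFinset ∩ Cl).card + 1 := by
  rw [Multiset.toFinset_cons, Finset.insert_inter_of_mem hC]
  rw [Finset.card_insert_of_notMem]
  intro hmem
  exact hn (by simpa using (Finset.mem_inter.mp hmem).1)

lemma inter_card_cons_le (Cl : Finset Formula) (Γ : Multiset Formula) (C : Formula) :
    (Γ.toFinset ∩ Cl).card ≤ ((C ::ₘ Γ).toFinset ∩ Cl).card := by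
  apply Finset.card_le_card
  apply Finset.inter_subset_inter_right
  rw [Multiset.toFinset_cons]
  exact Finset.subset_insert _ _

lemma capM_cons_left_lt (Cl : Finset Formula) (Γ Δ : Multiset Formula) {C : Formula}
    (hC : C ∈ Cl) (hn : C ∉ Γ) :
    capM Cl (C ::ₘ Γ) Δ < capM Cl Γ Δ := by
  unfold capM
  have h1 := inter_card_cons Cl Γ hC hn
  have h2 : ((C ::ₘ Γ).toFinset ∩ Cl).card ≤ Cl.card := inter_card_le Cl _
  omega

lemma capM_cons_right_lt (Cl : Finset Formula) (Γ Δ : Multiset Formula) {C : Formula}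
    (hC : C ∈ Cl) (hn : C ∉ Δ) :
    capM Cl Γ (C ::ₘ Δ) < capM Cl Γ Δ := by
  unfold capM
  have h1 := inter_card_cons Cl Δ hC hn
  have h2 : ((C ::ₘ Δ).toFinset ∩ Cl).card ≤ Cl.card := inter_card_le Cl _
  omega

lemma capM_cons_left_le (Cl : Finset Formula) (Γ Δ : Multiset Formula) (C : Formula) :
    capM Cl (C ::ₘ Γ) Δ ≤ capM Cl Γ Δ := by
  unfold capM
  have := inter_card_cons_le Cl Γ C
  omega

lemma capM_cons_right_le (Cl : Finset Formula) (Γ Δ : Multiset Formula) (C : Formula) :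
    capM Cl Γ (C ::ₘ Δ) ≤ capM Cl Γ Δ := by
  unfold capM
  have := inter_card_cons_le Cl Δ C
  omega

end Infra
section Tree

/-- countermodel trees -/
inductive PT : Type
  | mk (Γ Δ : Multiset Formula) (ch : List (Dir × PT))

namespace PT
def Gm : PT → Multiset Formula | .mk Γ _ _ => Γ
def Dm : PT → Multiset Formula | .mk _ Δ _ => Δ
def ch : PT → List (Dir × PT) | .mk _ _ c => c
end PT

abbrev PInfo := Option (Dir × Multiset Formula × Multiset Formula)

def flowCond (po : PInfo) (Γ : Multiset Formula) : Prop :=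
  match po with
  | none => True
  | some (Dir.up, S, _) =>
      (∀ B, Formula.box B ∈ S → B ∈ Γ) ∧ (∀ C, Formula.bbox C ∈ Γ → C ∈ S)
  | some (Dir.dn, S, _) =>
      (∀ B, Formula.bbox B ∈ S → B ∈ Γ) ∧ (∀ C, Formula.box C ∈ Γ → C ∈ S)

inductive Good : PInfo → PT → Prop
  | mk (po : PInfo) (Γ Δ : Multiset Formula) (ch : List (Dir × PT))
    (hndG : ∀ A ∈ Γ, A.NoDia)
    (hndD : ∀ A ∈ Δ, A.NoDia)
    (hatom : ∀ p : ℕ, Formula.atom p ∈ Γ → Formula.atom p ∈ Δ → False)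
    (hbot : Formula.bot ∉ Γ)
    (himpL : ∀ A B : Formula, A.imp B ∈ Γ → B ∈ Γ ∨ A ∈ Δ)
    (himpR : ∀ A B : Formula, A.imp B ∈ Δ → A ∈ Γ ∧ B ∈ Δ)
    (hflow : flowCond po Γ)
    (hwitbox : ∀ A, Formula.box A ∈ Δ →
      (∃ S P, po = some (Dir.dn, S, P) ∧ A ∈ P) ∨ (∃ c ∈ ch, c.1 = Dir.up ∧ A ∈ c.2.Dm))
    (hwitbbox : ∀ A, Formula.bbox A ∈ Δ →
      (∃ S P, po = some (Dir.up, S, P) ∧ A ∈ P) ∨ (∃ c ∈ ch, c.1 = Dir.dn ∧ A ∈ c.2.Dm))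
    (hch : ∀ c ∈ ch, Good (some (c.1, Γ, Δ)) c.2) :
    Good po (.mk Γ Δ ch)

namespace Good
variable {po : PInfo} {T : PT}
lemma nodiaG (h : Good po T) : ∀ A ∈ T.Gm, A.NoDia := by cases h; assumption
lemma nodiaD (h : Good po T) : ∀ A ∈ T.Dm, A.NoDia := by cases h; assumption
lemma atom (h : Good po T) : ∀ p : ℕ, Formula.atom p ∈ T.Gm → Formula.atom p ∈ T.Dm → False := by
  cases h; assumption
lemma bot (h : Good po T) : Formula.bot ∉ T.Gm := by cases h; assumption
lemma impL (h : Good po T) : ∀ A B : Formula, A.imp B ∈ T.Gm → B ∈ T.Gm ∨ A ∈ T.Dm := by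
  cases h; assumption
lemma impR (h : Good po T) : ∀ A B : Formula, A.imp B ∈ T.Dm → A ∈ T.Gm ∧ B ∈ T.Dm := by
  cases h; assumption
lemma flow (h : Good po T) : flowCond po T.Gm := by cases h; assumption
lemma witbox (h : Good po T) : ∀ A, Formula.box A ∈ T.Dm →
    (∃ S P, po = some (Dir.dn, S, P) ∧ A ∈ P) ∨ (∃ c ∈ T.ch, c.1 = Dir.up ∧ A ∈ c.2.Dm) := by
  cases h; assumption
lemma witbbox (h : Good po T) : ∀ A, Formula.bbox A ∈ T.Dm →
    (∃ S P, po = some (Dir.up, S, P) ∧ A ∈ P) ∨ (∃ c ∈ T.ch, c.1 = Dir.dn ∧ A ∈ c.2.Dm) := by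
  cases h; assumption
lemma child (h : Good po T) : ∀ c ∈ T.ch, Good (some (c.1, T.Gm, T.Dm)) c.2 := by
  cases h; assumption
end Good

/-- navigate to a subtree -/
def subAt : List ℕ → PT → Option PT
  | [], T => some T
  | i :: a, T =>
    match T.ch[i]? with
    | some c => subAt a c.2
    | none => none

lemma subAt_append (a : List ℕ) (i : ℕ) (T : PT) :
    subAt (a ++ [i]) T = (subAt a T).bind (fun N => (N.ch[i]?).map Prod.snd) := by
  induction a generalizing T with
  | nil =>
    simp only [List.nil_append, subAt, Option.bind]
    cases h : T.ch[i]? <;> simp [subAt, h]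
  | cons j a ih =>
    simp only [List.cons_append, subAt]
    cases h : T.ch[j]?
    · simp
    · simp [ih]

section Model

variable (T0 : PT)

def Wd := {a : List ℕ // ∃ N, subAt a T0 = some N}

noncomputable def nodeAt (x : Wd T0) : PT := Classical.choose x.2

lemma nodeAt_spec (x : Wd T0) : subAt x.1 T0 = some (nodeAt T0 x) := Classical.choose_spec x.2

lemma subAt_child {x : Wd T0} {i : ℕ} {c : Dir × PT}
    (hc : (nodeAt T0 x).ch[i]? = some c) :
    subAt (x.1 ++ [i]) T0 = some c.2 := by
  rw [subAt_append, nodeAt_spec T0 x, Option.bind_some, hc, Option.map_some]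

lemma nodeAt_eq {x : Wd T0} {N : PT} (h : subAt x.1 T0 = some N) : nodeAt T0 x = N := by
  have := nodeAt_spec T0 x
  rw [h] at this
  exact (Option.some_inj.mp this).symm

def RelT (x y : Wd T0) : Prop :=
  (∃ i c, (nodeAt T0 x).ch[i]? = some c ∧ c.1 = Dir.up ∧ y.1 = x.1 ++ [i]) ∨
  (∃ i c, (nodeAt T0 y).ch[i]? = some c ∧ c.1 = Dir.dn ∧ x.1 = y.1 ++ [i])

def ValT (x : Wd T0) (p : ℕ) : Prop := Formula.atom p ∈ (nodeAt T0 x).Gm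

/-- every node of a good tree is good, with the appropriate parent info -/
lemma good_at (h0 : Good none T0) :
    ∀ (a : List ℕ) (N : PT), subAt a T0 = some N →
      (a = [] ∧ Good none N) ∨
      (∃ (b : List ℕ) (i : ℕ) (P : PT) (c : Dir × PT),
        a = b ++ [i] ∧ subAt b T0 = some P ∧ P.ch[i]? = some c ∧ c.2 = N ∧
        Good (some (c.1, P.Gm, P.Dm)) N) := by
  intro a
  induction a using List.reverseRecOn with
  | nil =>
    intro N hN
    simp only [subAt] at hN
    exact Or.inl ⟨rfl, by rwa [← Option.some_inj.mp hN]⟩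
  | append_singleton b i ih =>
    intro N hN
    rw [subAt_append] at hN
    cases hb : subAt b T0 with
    | none => rw [hb] at hN; simp at hN
    | some P =>
      rw [hb] at hN
      simp only [Option.bind_some] at hN
      cases hc : P.ch[i]? with
      | none => rw [hc] at hN; simp at hN
      | some c =>
        rw [hc] at hN
        simp only [Option.map_some] at hN
        have hcN : c.2 = N := Option.some_inj.mp hN
        have hPgood : ∃ po, Good po P := by
          rcases ih P hb with ⟨_, hg⟩ | ⟨_, _, _, _, _, _, _, _, hg⟩
          · exact ⟨none, hg⟩
          · exact ⟨_, hg⟩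
        rcases hPgood with ⟨po, hPg⟩
        have hcmem : c ∈ P.ch := List.mem_of_getElem? hc
        refine Or.inr ⟨b, i, P, c, rfl, hb, hc, hcN, ?_⟩
        rw [← hcN]
        exact hPg.child c hcmem

lemma node_good (h0 : Good none T0) (x : Wd T0) : ∃ po, Good po (nodeAt T0 x) := by
  rcases good_at T0 h0 x.1 (nodeAt T0 x) (nodeAt_spec T0 x) with ⟨_, hg⟩ | ⟨_,_,_,_,_,_,_,_,hg⟩
  · exact ⟨none, hg⟩
  · exact ⟨_, hg⟩

theorem truth (h0 : Good none T0) :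
    ∀ (A : Formula) (x : Wd T0),
      (A ∈ (nodeAt T0 x).Gm → Force (RelT T0) (ValT T0) x A) ∧
      (A ∈ (nodeAt T0 x).Dm → ¬ Force (RelT T0) (ValT T0) x A) := by
  intro A
  induction A with
  | atom p =>
    intro x
    obtain ⟨po, hg⟩ := node_good T0 h0 x
    constructor
    · intro h; exact h
    · intro h hf; exact hg.atom p hf h
  | bot =>
    intro x
    obtain ⟨po, hg⟩ := node_good T0 h0 x
    constructor
    · intro h; exact absurd h hg.bot
    · intro _ hf; exact hf
  | imp A B ihA ihB =>
    intro x
    obtain ⟨po, hg⟩ := node_good T0 h0 x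
    constructor
    · intro h hfA
      rcases hg.impL A B h with hB | hA
      · exact (ihB x).1 hB
      · exact absurd hfA ((ihA x).2 hA)
    · intro h hf
      obtain ⟨hA, hB⟩ := hg.impR A B h
      exact (ihB x).2 hB (hf ((ihA x).1 hA))
  | dia A ihA =>
    intro x
    obtain ⟨po, hg⟩ := node_good T0 h0 x
    constructor
    · intro h; exact absurd (hg.nodiaG _ h) (by simp [Formula.NoDia])
    · intro h; exact absurd (hg.nodiaD _ h) (by simp [Formula.NoDia])
  | bdia A ihA =>
    intro x
    obtain ⟨po, hg⟩ := node_good T0 h0 x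
    constructor
    · intro h; exact absurd (hg.nodiaG _ h) (by simp [Formula.NoDia])
    · intro h; exact absurd (hg.nodiaD _ h) (by simp [Formula.NoDia])
  | box A ihA =>
    intro x
    obtain ⟨po, hg⟩ := node_good T0 h0 x
    constructor
    · intro h y hxy
      rcases hxy with ⟨i, c, hc, hdir, hy⟩ | ⟨i, c, hc, hdir, hx⟩
      · have hyn : nodeAt T0 y = c.2 := nodeAt_eq T0 (by rw [hy]; exact subAt_child T0 hc)
        have hcg := hg.child c (List.mem_of_getElem? hc)
        rw [hdir] at hcg
        have hflow := hcg.flow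
        simp only [flowCond] at hflow
        exact (ihA y).1 (by rw [hyn]; exact hflow.1 A h)
      · obtain ⟨poy, hgy⟩ := node_good T0 h0 y
        have hxn : nodeAt T0 x = c.2 := nodeAt_eq T0 (by rw [hx]; exact subAt_child T0 hc)
        have hcg := hgy.child c (List.mem_of_getElem? hc)
        rw [hdir] at hcg
        have hflow := hcg.flow
        simp only [flowCond] at hflow
        exact (ihA y).1 (hflow.2 A (by rw [← hxn]; exact h))
    · intro h hf
      rcases good_at T0 h0 x.1 (nodeAt T0 x) (nodeAt_spec T0 x) with
        ⟨hx0, hgr⟩ | ⟨b, i, P, c, hxb, hb, hc, hcN, hgp⟩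
      · rcases hgr.witbox A h with ⟨S, P, hpo, _⟩ | ⟨c, hcmem, hdir, hAc⟩
        · exact nomatch hpo
        · obtain ⟨j, hj⟩ := List.getElem?_of_mem hcmem
          let y : Wd T0 := ⟨x.1 ++ [j], ⟨c.2, subAt_child T0 hj⟩⟩
          have hyn : nodeAt T0 y = c.2 := nodeAt_eq T0 (subAt_child T0 hj)
          exact (ihA y).2 (by rw [hyn]; exact hAc) (hf y (Or.inl ⟨j, c, hj, hdir, rfl⟩))
      · rcases hgp.witbox A h with ⟨S, P', hpo, hAP⟩ | ⟨c', hcmem, hdir, hAc⟩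
        · simp only [Option.some_inj, Prod.mk.injEq] at hpo
          obtain ⟨hd1, hS, hP⟩ := hpo
          let y : Wd T0 := ⟨b, ⟨P, hb⟩⟩
          have hyn : nodeAt T0 y = P := nodeAt_eq T0 hb
          have hrel : RelT T0 x y := Or.inr ⟨i, c, by rw [hyn]; exact hc, hd1, hxb⟩
          refine (ihA y).2 ?_ (hf y hrel)
          rw [hyn, hP]
          exact hAP
        · obtain ⟨j, hj⟩ := List.getElem?_of_mem hcmem
          let y : Wd T0 := ⟨x.1 ++ [j], ⟨c'.2, subAt_child T0 hj⟩⟩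
          have hyn : nodeAt T0 y = c'.2 := nodeAt_eq T0 (subAt_child T0 hj)
          exact (ihA y).2 (by rw [hyn]; exact hAc) (hf y (Or.inl ⟨j, c', hj, hdir, rfl⟩))
  | bbox A ihA =>
    intro x
    obtain ⟨po, hg⟩ := node_good T0 h0 x
    constructor
    · intro h y hxy
      rcases hxy with ⟨i, c, hc, hdir, hy⟩ | ⟨i, c, hc, hdir, hx⟩
      · -- x is an up-child of y : y is a predecessor
        obtain ⟨poy, hgy⟩ := node_good T0 h0 y
        have hxn : nodeAt T0 x = c.2 := nodeAt_eq T0 (by rw [hy]; exact subAt_child T0 hc)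
        have hcg := hgy.child c (List.mem_of_getElem? hc)
        rw [hdir] at hcg
        have hflow := hcg.flow
        simp only [flowCond] at hflow
        exact (ihA y).1 (hflow.2 A (by rw [← hxn]; exact h))
      · -- y is a dn-child of x : y is a predecessor
        have hyn : nodeAt T0 y = c.2 := nodeAt_eq T0 (by rw [hx]; exact subAt_child T0 hc)
        have hcg := hg.child c (List.mem_of_getElem? hc)
        rw [hdir] at hcg
        have hflow := hcg.flow
        simp only [flowCond] at hflow
        exact (ihA y).1 (by rw [hyn]; exact hflow.1 A h)
    · intro h hf
      rcases good_at T0 h0 x.1 (nodeAt T0 x) (nodeAt_spec T0 x) with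
        ⟨hx0, hgr⟩ | ⟨b, i, P, c, hxb, hb, hc, hcN, hgp⟩
      · rcases hgr.witbbox A h with ⟨S, P, hpo, _⟩ | ⟨c, hcmem, hdir, hAc⟩
        · exact nomatch hpo
        · obtain ⟨j, hj⟩ := List.getElem?_of_mem hcmem
          let y : Wd T0 := ⟨x.1 ++ [j], ⟨c.2, subAt_child T0 hj⟩⟩
          have hyn : nodeAt T0 y = c.2 := nodeAt_eq T0 (subAt_child T0 hj)
          exact (ihA y).2 (by rw [hyn]; exact hAc) (hf y (Or.inr ⟨j, c, hj, hdir, rfl⟩))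
      · rcases hgp.witbbox A h with ⟨S, P', hpo, hAP⟩ | ⟨c', hcmem, hdir, hAc⟩
        · simp only [Option.some_inj, Prod.mk.injEq] at hpo
          obtain ⟨hd1, hS, hP⟩ := hpo
          let y : Wd T0 := ⟨b, ⟨P, hb⟩⟩
          have hyn : nodeAt T0 y = P := nodeAt_eq T0 hb
          have hrel : RelT T0 y x := Or.inl ⟨i, c, by rw [hyn]; exact hc, hd1, hxb⟩
          refine (ihA y).2 ?_ (hf y hrel)
          rw [hyn, hP]
          exact hAP
        · obtain ⟨j, hj⟩ := List.getElem?_of_mem hcmem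
          let y : Wd T0 := ⟨x.1 ++ [j], ⟨c'.2, subAt_child T0 hj⟩⟩
          have hyn : nodeAt T0 y = c'.2 := nodeAt_eq T0 (subAt_child T0 hj)
          exact (ihA y).2 (by rw [hyn]; exact hAc) (hf y (Or.inr ⟨j, c', hj, hdir, rfl⟩))

end Model

end Tree
section Helpers

lemma Formula.mem_subf_imp_left (A B : Formula) : A ∈ (A.imp B).subf := by
  rw [Formula.subf]
  exact Finset.mem_insert_of_mem (Finset.mem_union_left _ (Formula.mem_subf_self A))

lemma Formula.mem_subf_imp_right (A B : Formula) : B ∈ (A.imp B).subf := by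
  rw [Formula.subf]
  exact Finset.mem_insert_of_mem (Finset.mem_union_right _ (Formula.mem_subf_self B))

lemma Formula.mem_subf_box (A : Formula) : A ∈ A.box.subf := by
  rw [Formula.subf]
  exact Finset.mem_insert_of_mem (Formula.mem_subf_self A)

lemma Formula.mem_subf_bbox (A : Formula) : A ∈ A.bbox.subf := by
  rw [Formula.subf]
  exact Finset.mem_insert_of_mem (Formula.mem_subf_self A)

lemma Formula.mdepth_imp_left (A B : Formula) : A.mdepth ≤ (A.imp B).mdepth :=
  le_max_left _ _

lemma Formula.mdepth_imp_right (A B : Formula) : B.mdepth ≤ (A.imp B).mdepth :=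
  le_max_right _ _

def OkM (Cl : Finset Formula) (k : ℕ) (Γ : Multiset Formula) : Prop :=
  ∀ A ∈ Γ, A ∈ Cl ∧ A.mdepth ≤ k

lemma OkM.cons {Cl k Γ} {A : Formula} (hA : A ∈ Cl) (hd : A.mdepth ≤ k) (h : OkM Cl k Γ) :
    OkM Cl k (A ::ₘ Γ) := by
  intro B hB
  rcases Multiset.mem_cons.mp hB with rfl | hB
  · exact ⟨hA, hd⟩
  · exact h B hB

lemma OkM.mono {Cl k k' Γ} (hkk : k ≤ k') (h : OkM Cl k Γ) : OkM Cl k' Γ :=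
  fun A hA => ⟨(h A hA).1, le_trans (h A hA).2 hkk⟩

lemma OkM.zero {Cl k} : OkM Cl k 0 := by intro A hA; simp at hA

lemma capM_cons_left_mem {Cl : Finset Formula} {Γ : Multiset Formula} {A : Formula}
    (hA : A ∈ Γ) (Δ : Multiset Formula) : capM Cl (A ::ₘ Γ) Δ = capM Cl Γ Δ := by
  unfold capM
  rw [Multiset.toFinset_cons, Finset.insert_eq_self.mpr (Multiset.mem_toFinset.mpr hA)]

lemma capM_cons_right_mem {Cl : Finset Formula} {Δ : Multiset Formula} {A : Formula}
    (hA : A ∈ Δ) (Γ : Multiset Formula) : capM Cl Γ (A ::ₘ Δ) = capM Cl Γ Δ := by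
  unfold capM
  rw [Multiset.toFinset_cons, Finset.insert_eq_self.mpr (Multiset.mem_toFinset.mpr hA)]

lemma lastDir_append : ∀ (G : Ctx) (a b : Multiset Formula) (d : Dir),
    lastDir (G ++ [(a, b, d)]) = some d := by
  intro G a b d
  induction G with
  | nil => rfl
  | cons x G ih =>
    cases G with
    | nil => rfl
    | cons y G' => exact ih

/-- the conclusion of the main recursive construction -/
def RecConc (Cl : Finset Formula) (k : ℕ) (H : Ctx) (Sg Pg : Multiset Formula) (d : Dir)
    (Γ Δ : Multiset Formula) : Prop :=
  (∃ Sg' Pg' : Multiset Formula,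
      OkM Cl (k+1) Sg' ∧ OkM Cl (k+1) Pg' ∧
      (∀ A ∈ Sg, A ∈ Sg') ∧ (∀ A ∈ Pg, A ∈ Pg') ∧
      capM Cl Sg' Pg' < capM Cl Sg Pg ∧
      ¬ Deriv (plug H (.single Sg' Pg'))) ∨
  (∃ T : PT, Good (some (d, Sg, Pg)) T ∧ (∀ A ∈ Γ, A ∈ T.Gm) ∧ (∀ A ∈ Δ, A ∈ T.Dm))

lemma RecConc.mono {Cl k H Sg Pg d} {Γ Δ Γ' Δ' : Multiset Formula}
    (h : RecConc Cl k H Sg Pg d Γ' Δ') (hG : ∀ A ∈ Γ, A ∈ Γ') (hD : ∀ A ∈ Δ, A ∈ Δ') :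
    RecConc Cl k H Sg Pg d Γ Δ := by
  rcases h with h | ⟨T, hT, h1, h2⟩
  · exact Or.inl h
  · exact Or.inr ⟨T, hT, fun A hA => h1 A (hG A hA), fun A hA => h2 A (hD A hA)⟩

end Helpers
lemma plug_snoc_up (H : Ctx) (a b : Multiset Formula) (S : LNS) :
    plug (H ++ [(a, b, Dir.up)]) S = plug H (.up a b S) := by
  rw [plug_append]; rfl

lemma plug_snoc_dn (H : Ctx) (a b : Multiset Formula) (S : LNS) :
    plug (H ++ [(a, b, Dir.dn)]) S = plug H (.dn a b S) := by
  rw [plug_append]; rfl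
theorem rec_main (Cl : Finset Formula)
    (hCl : ∀ A ∈ Cl, ∀ B ∈ A.subf, B ∈ Cl) (hND : ∀ A ∈ Cl, A.NoDia) :
    ∀ (k m : ℕ) (H : Ctx) (Sg Pg : Multiset Formula) (d : Dir) (Γ Δ : Multiset Formula),
      capM Cl Γ Δ ≤ m →
      OkM Cl (k+1) Sg → OkM Cl (k+1) Pg → OkM Cl k Γ → OkM Cl k Δ →
      ¬ Deriv (plug (H ++ [(Sg, Pg, d)]) (.single Γ Δ)) →
      RecConc Cl k H Sg Pg d Γ Δ := by
  intro k
  induction k using Nat.strong_induction_on with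
  | _ k ihk =>
  intro m
  induction m using Nat.strong_induction_on with
  | _ m ihm =>
  intro H Sg Pg d Γ Δ hcap hOkS hOkP hOkG hOkD Hcon
  -- defect 1 : ⊥ on the left
  by_cases h1 : Formula.bot ∈ Γ
  · refine absurd ?_ Hcon
    have hrule := Deriv.botL (H ++ [(Sg, Pg, d)]) (Γ.erase Formula.bot) Δ
    rwa [Multiset.cons_erase h1] at hrule
  -- defect 2 : an atom on both sides
  by_cases h2 : ∃ p : ℕ, Formula.atom p ∈ Γ ∧ Formula.atom p ∈ Δ
  · obtain ⟨p, hpG, hpD⟩ := h2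
    refine absurd ?_ Hcon
    have hrule := Deriv.id (H ++ [(Sg, Pg, d)]) (Γ.erase (Formula.atom p)) (Δ.erase (Formula.atom p)) p
    rwa [Multiset.cons_erase hpG, Multiset.cons_erase hpD] at hrule
  -- defect 3 : unsaturated implication on the left
  by_cases h3 : ∃ A B : Formula, A.imp B ∈ Γ ∧ B ∉ Γ ∧ A ∉ Δ
  · obtain ⟨A, B, hmem, hBn, hAn⟩ := h3
    have hABCl : A.imp B ∈ Cl := (hOkG _ hmem).1
    have hACl : A ∈ Cl := hCl _ hABCl A (Formula.mem_subf_imp_left A B)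
    have hBCl : B ∈ Cl := hCl _ hABCl B (Formula.mem_subf_imp_right A B)
    have hAd : A.mdepth ≤ k := le_trans (Formula.mdepth_imp_left A B) (hOkG _ hmem).2
    have hBd : B.mdepth ≤ k := le_trans (Formula.mdepth_imp_right A B) (hOkG _ hmem).2
    have e : A.imp B ::ₘ Γ.erase (A.imp B) = Γ := Multiset.cons_erase hmem
    by_cases hd1 : Deriv (plug (H ++ [(Sg, Pg, d)]) (.single (B ::ₘ Γ) Δ))
    · have hd2 : ¬ Deriv (plug (H ++ [(Sg, Pg, d)]) (.single Γ (A ::ₘ Δ))) := by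
        intro hd2
        refine Hcon ?_
        have hrule := Deriv.impL (H ++ [(Sg, Pg, d)]) (Γ.erase (A.imp B)) Δ A B
          (by rw [e]; exact hd1) (by rw [e]; exact hd2)
        rwa [e] at hrule
      have hcap' : capM Cl Γ (A ::ₘ Δ) < capM Cl Γ Δ := capM_cons_right_lt Cl Γ Δ hACl hAn
      have hrec := ihm (capM Cl Γ (A ::ₘ Δ)) (lt_of_lt_of_le hcap' hcap) H Sg Pg d Γ (A ::ₘ Δ)
        le_rfl hOkS hOkP hOkG (OkM.cons hACl hAd hOkD) hd2
      exact hrec.mono (fun C hC => hC) (fun C hC => Multiset.mem_cons_of_mem hC)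
    · have hcap' : capM Cl (B ::ₘ Γ) Δ < capM Cl Γ Δ := capM_cons_left_lt Cl Γ Δ hBCl hBn
      have hrec := ihm (capM Cl (B ::ₘ Γ) Δ) (lt_of_lt_of_le hcap' hcap) H Sg Pg d (B ::ₘ Γ) Δ
        le_rfl hOkS hOkP (OkM.cons hBCl hBd hOkG) hOkD hd1
      exact hrec.mono (fun C hC => Multiset.mem_cons_of_mem hC) (fun C hC => hC)
  -- defect 4 : unsaturated implication on the right
  by_cases h4 : ∃ A B : Formula, A.imp B ∈ Δ ∧ ¬ (A ∈ Γ ∧ B ∈ Δ)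
  · obtain ⟨A, B, hmem, hn⟩ := h4
    have hABCl : A.imp B ∈ Cl := (hOkD _ hmem).1
    have hACl : A ∈ Cl := hCl _ hABCl A (Formula.mem_subf_imp_left A B)
    have hBCl : B ∈ Cl := hCl _ hABCl B (Formula.mem_subf_imp_right A B)
    have hAd : A.mdepth ≤ k := le_trans (Formula.mdepth_imp_left A B) (hOkD _ hmem).2
    have hBd : B.mdepth ≤ k := le_trans (Formula.mdepth_imp_right A B) (hOkD _ hmem).2
    have e : A.imp B ::ₘ Δ.erase (A.imp B) = Δ := Multiset.cons_erase hmem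
    have hprem : ¬ Deriv (plug (H ++ [(Sg, Pg, d)]) (.single (A ::ₘ Γ) (B ::ₘ Δ))) := by
      intro hp
      refine Hcon ?_
      have hrule := Deriv.impR (H ++ [(Sg, Pg, d)]) Γ (Δ.erase (A.imp B)) A B (by rw [e]; exact hp)
      rwa [e] at hrule
    have hcap' : capM Cl (A ::ₘ Γ) (B ::ₘ Δ) < capM Cl Γ Δ := by
      by_cases hA : A ∈ Γ
      · have hBn : B ∉ Δ := fun hB => hn ⟨hA, hB⟩
        rw [capM_cons_left_mem hA]
        exact capM_cons_right_lt Cl Γ Δ hBCl hBn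
      · calc capM Cl (A ::ₘ Γ) (B ::ₘ Δ) ≤ capM Cl (A ::ₘ Γ) Δ :=
              capM_cons_right_le Cl (A ::ₘ Γ) Δ B
          _ < capM Cl Γ Δ := capM_cons_left_lt Cl Γ Δ hACl hA
    have hrec := ihm (capM Cl (A ::ₘ Γ) (B ::ₘ Δ)) (lt_of_lt_of_le hcap' hcap) H Sg Pg d
      (A ::ₘ Γ) (B ::ₘ Δ) le_rfl hOkS hOkP (OkM.cons hACl hAd hOkG) (OkM.cons hBCl hBd hOkD) hprem
    exact hrec.mono (fun C hC => Multiset.mem_cons_of_mem hC)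
      (fun C hC => Multiset.mem_cons_of_mem hC)
  -- defect 5 : box on the left of the parent not pulled in (up)
  by_cases h5 : ∃ B : Formula, d = Dir.up ∧ Formula.box B ∈ Sg ∧ B ∉ Γ
  · obtain ⟨B, hd', hBS, hBn⟩ := h5
    subst hd'
    have hBCl : B ∈ Cl := hCl _ (hOkS _ hBS).1 B (Formula.mem_subf_box B)
    have hBd : B.mdepth ≤ k := by
      have := (hOkS _ hBS).2
      simp only [Formula.mdepth] at this
      omega
    have e : Formula.box B ::ₘ Sg.erase (Formula.box B) = Sg := Multiset.cons_erase hBS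
    have hprem : ¬ Deriv (plug (H ++ [(Sg, Pg, Dir.up)]) (.single (B ::ₘ Γ) Δ)) := by
      intro hp
      refine Hcon ?_
      rw [plug_snoc_up] at hp ⊢
      have hrule := Deriv.boxL1 H (Sg.erase (Formula.box B)) Pg Γ Δ B (by rw [e]; exact hp)
      rwa [e] at hrule
    have hcap' : capM Cl (B ::ₘ Γ) Δ < capM Cl Γ Δ := capM_cons_left_lt Cl Γ Δ hBCl hBn
    have hrec := ihm (capM Cl (B ::ₘ Γ) Δ) (lt_of_lt_of_le hcap' hcap) H Sg Pg Dir.up (B ::ₘ Γ) Δ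
      le_rfl hOkS hOkP (OkM.cons hBCl hBd hOkG) hOkD hprem
    exact hrec.mono (fun C hC => Multiset.mem_cons_of_mem hC) (fun C hC => hC)
  -- defect 6 : bbox on the left of the parent not pulled in (dn)
  by_cases h6 : ∃ B : Formula, d = Dir.dn ∧ Formula.bbox B ∈ Sg ∧ B ∉ Γ
  · obtain ⟨B, hd', hBS, hBn⟩ := h6
    subst hd'
    have hBCl : B ∈ Cl := hCl _ (hOkS _ hBS).1 B (Formula.mem_subf_bbox B)
    have hBd : B.mdepth ≤ k := by
      have := (hOkS _ hBS).2
      simp only [Formula.mdepth] at this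
      omega
    have e : Formula.bbox B ::ₘ Sg.erase (Formula.bbox B) = Sg := Multiset.cons_erase hBS
    have hprem : ¬ Deriv (plug (H ++ [(Sg, Pg, Dir.dn)]) (.single (B ::ₘ Γ) Δ)) := by
      intro hp
      refine Hcon ?_
      rw [plug_snoc_dn] at hp ⊢
      have hrule := Deriv.bboxL1 H (Sg.erase (Formula.bbox B)) Pg Γ Δ B (by rw [e]; exact hp)
      rwa [e] at hrule
    have hcap' : capM Cl (B ::ₘ Γ) Δ < capM Cl Γ Δ := capM_cons_left_lt Cl Γ Δ hBCl hBn
    have hrec := ihm (capM Cl (B ::ₘ Γ) Δ) (lt_of_lt_of_le hcap' hcap) H Sg Pg Dir.dn (B ::ₘ Γ) Δ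
      le_rfl hOkS hOkP (OkM.cons hBCl hBd hOkG) hOkD hprem
    exact hrec.mono (fun C hC => Multiset.mem_cons_of_mem hC) (fun C hC => hC)
  -- defect 7 : bbox on the left not flowed back to the parent (up)
  by_cases h7 : ∃ C : Formula, d = Dir.up ∧ Formula.bbox C ∈ Γ ∧ C ∉ Sg
  · obtain ⟨C, hd', hCG, hCn⟩ := h7
    subst hd'
    have hCCl : C ∈ Cl := hCl _ (hOkG _ hCG).1 C (Formula.mem_subf_bbox C)
    have hCd : C.mdepth ≤ k + 1 := by
      have := (hOkG _ hCG).2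
      simp only [Formula.mdepth] at this
      omega
    have e : Formula.bbox C ::ₘ Γ.erase (Formula.bbox C) = Γ := Multiset.cons_erase hCG
    have hncon : ¬ Deriv (plug H (.single (C ::ₘ Sg) Pg)) := by
      intro hp
      refine Hcon ?_
      rw [plug_snoc_up]
      have hrule := Deriv.bboxL2 H Sg Pg (Γ.erase (Formula.bbox C)) Δ C hp
      rwa [e] at hrule
    exact Or.inl ⟨C ::ₘ Sg, Pg, OkM.cons hCCl hCd hOkS, hOkP,
      fun A hA => Multiset.mem_cons_of_mem hA, fun A hA => hA,
      capM_cons_left_lt Cl Sg Pg hCCl hCn, hncon⟩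
  -- defect 8 : box on the left not flowed back to the parent (dn)
  by_cases h8 : ∃ C : Formula, d = Dir.dn ∧ Formula.box C ∈ Γ ∧ C ∉ Sg
  · obtain ⟨C, hd', hCG, hCn⟩ := h8
    subst hd'
    have hCCl : C ∈ Cl := hCl _ (hOkG _ hCG).1 C (Formula.mem_subf_box C)
    have hCd : C.mdepth ≤ k + 1 := by
      have := (hOkG _ hCG).2
      simp only [Formula.mdepth] at this
      omega
    have e : Formula.box C ::ₘ Γ.erase (Formula.box C) = Γ := Multiset.cons_erase hCG
    have hncon : ¬ Deriv (plug H (.single (C ::ₘ Sg) Pg)) := by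
      intro hp
      refine Hcon ?_
      rw [plug_snoc_dn]
      have hrule := Deriv.boxL2 H Sg Pg (Γ.erase (Formula.box C)) Δ C hp
      rwa [e] at hrule
    exact Or.inl ⟨C ::ₘ Sg, Pg, OkM.cons hCCl hCd hOkS, hOkP,
      fun A hA => Multiset.mem_cons_of_mem hA, fun A hA => hA,
      capM_cons_left_lt Cl Sg Pg hCCl hCn, hncon⟩
  -- saturated: process the modal needs on the right
  have aux : ∀ (ℓ : List Formula) (acc : List (Dir × PT)),
      (∀ c ∈ acc, Good (some (c.1, Γ, Δ)) c.2) →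
      (∀ A : Formula, A.box ∈ Δ → A.box ∈ ℓ ∨ (d = Dir.dn ∧ A ∈ Pg) ∨
        (∃ c ∈ acc, c.1 = Dir.up ∧ A ∈ c.2.Dm)) →
      (∀ A : Formula, A.bbox ∈ Δ → A.bbox ∈ ℓ ∨ (d = Dir.up ∧ A ∈ Pg) ∨
        (∃ c ∈ acc, c.1 = Dir.dn ∧ A ∈ c.2.Dm)) →
      RecConc Cl k H Sg Pg d Γ Δ := by
    intro ℓ
    induction ℓ with
    | nil =>
      intro acc hacc hcov1 hcov2
      right
      refine ⟨PT.mk Γ Δ acc, ?_, fun A hA => hA, fun A hA => hA⟩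
      refine Good.mk _ Γ Δ acc
        (fun A hA => hND A (hOkG A hA).1)
        (fun A hA => hND A (hOkD A hA).1)
        (fun p hpG hpD => h2 ⟨p, hpG, hpD⟩)
        h1 ?_ ?_ ?_ ?_ ?_ hacc
      · intro A B hmem
        by_cases hB : B ∈ Γ
        · exact Or.inl hB
        by_cases hA : A ∈ Δ
        · exact Or.inr hA
        exact absurd ⟨A, B, hmem, hB, hA⟩ h3
      · intro A B hmem
        by_cases hAB : A ∈ Γ ∧ B ∈ Δ
        · exact hAB
        exact absurd ⟨A, B, hmem, hAB⟩ h4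
      · cases d with
        | up =>
          refine ⟨?_, ?_⟩
          · intro B hB
            by_contra hBn
            exact h5 ⟨B, rfl, hB, hBn⟩
          · intro C hC
            by_contra hCn
            exact h7 ⟨C, rfl, hC, hCn⟩
        | dn =>
          refine ⟨?_, ?_⟩
          · intro B hB
            by_contra hBn
            exact h6 ⟨B, rfl, hB, hBn⟩
          · intro C hC
            by_contra hCn
            exact h8 ⟨C, rfl, hC, hCn⟩
      · intro A hA
        rcases hcov1 A hA with hin | ⟨hdd, hAP⟩ | ⟨c, hcmem, hcd, hAc⟩
        · exact absurd hin List.not_mem_nil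
        · exact Or.inl ⟨Sg, Pg, by rw [hdd], hAP⟩
        · exact Or.inr ⟨c, hcmem, hcd, hAc⟩
      · intro A hA
        rcases hcov2 A hA with hin | ⟨hdd, hAP⟩ | ⟨c, hcmem, hcd, hAc⟩
        · exact absurd hin List.not_mem_nil
        · exact Or.inl ⟨Sg, Pg, by rw [hdd], hAP⟩
        · exact Or.inr ⟨c, hcmem, hcd, hAc⟩
    | cons C ℓ ihl =>
      intro acc hacc hcov1 hcov2
      by_cases hCbox : ∃ A : Formula, C = A.box
      · obtain ⟨A, rfl⟩ := hCbox
        by_cases hmem : A.box ∈ Δ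
        · by_cases hflag : (d = Dir.dn ∧ A ∈ Pg) ∨ (∃ c ∈ acc, c.1 = Dir.up ∧ A ∈ c.2.Dm)
          · refine ihl acc hacc ?_ ?_
            · intro B hB
              rcases hcov1 B hB with hin | h | h
              · rcases List.mem_cons.mp hin with heq | hin
                · have hBA : B = A := by injection heq
                  subst hBA
                  rcases hflag with h | h
                  · exact Or.inr (Or.inl h)
                  · exact Or.inr (Or.inr h)
                · exact Or.inl hin
              · exact Or.inr (Or.inl h)
              · exact Or.inr (Or.inr h)
            · intro B hB
              rcases hcov2 B hB with hin | h | h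
              · rcases List.mem_cons.mp hin with heq | hin
                · exact Formula.noConfusion heq
                · exact Or.inl hin
              · exact Or.inr (Or.inl h)
              · exact Or.inr (Or.inr h)
          · -- really process the need □A ∈ Δ
            have hACl : A ∈ Cl := hCl _ (hOkD _ hmem).1 A (Formula.mem_subf_box A)
            have hk1 : 1 ≤ k := by
              have := (hOkD _ hmem).2
              simp only [Formula.mdepth] at this
              omega
            have hAd : A.mdepth ≤ k - 1 := by
              have := (hOkD _ hmem).2
              simp only [Formula.mdepth] at this
              omega
            have e : Formula.box A ::ₘ Δ.erase (Formula.box A) = Δ := Multiset.cons_erase hmem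
            have hstep :
                (¬ Deriv (plug ((H ++ [(Sg, Pg, d)]) ++ [(Γ, Δ, Dir.up)]) (.single 0 {A}))) ∨
                (d = Dir.dn ∧ A ∉ Pg ∧ ¬ Deriv (plug H (.single Sg (A ::ₘ Pg)))) := by
              cases d with
              | up =>
                left
                intro hp
                refine Hcon ?_
                have hlast : lastDir (H ++ [(Sg, Pg, Dir.up)]) ≠ some Dir.dn := by
                  rw [lastDir_append]
                  simp
                have hrule := Deriv.boxR2 (H ++ [(Sg, Pg, Dir.up)]) Γ
                  (Δ.erase (Formula.box A)) A hlast (by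
                    rw [e]
                    rw [plug_snoc_up (H ++ [(Sg, Pg, Dir.up)])] at hp
                    exact hp)
                rwa [e] at hrule
              | dn =>
                by_cases hp1 : Deriv (plug H (.dn Sg (A ::ₘ Pg) (.single Γ Δ)))
                · left
                  intro hp
                  refine Hcon ?_
                  rw [plug_snoc_dn]
                  have hrule := Deriv.boxR1 H Sg Pg Γ (Δ.erase (Formula.box A)) A
                    (by rw [e]; exact hp1)
                    (by
                      rw [e]
                      rw [plug_snoc_up (H ++ [(Sg, Pg, Dir.dn)]), plug_snoc_dn] at hp
                      exact hp)
                  rwa [e] at hrule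
                · right
                  have hAP : A ∉ Pg := fun hAP => hflag (Or.inl ⟨rfl, hAP⟩)
                  refine ⟨rfl, hAP, ?_⟩
                  intro hp
                  refine hp1 ?_
                  have := Deriv.ew H Sg (A ::ₘ Pg) Dir.dn Γ Δ hp
                  rwa [plug_snoc_dn] at this
            rcases hstep with hP2 | ⟨hdd, hAPn, hncon⟩
            · -- build the child with the (k-1) recursion
              obtain ⟨k', rfl⟩ : ∃ k', k = k' + 1 := ⟨k - 1, by omega⟩
              have hOkA : OkM Cl k' {A} := by
                intro B hB
                rw [Multiset.mem_singleton] at hB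
                subst hB
                exact ⟨hACl, by omega⟩
              have hrec := ihk k' (by omega) (capM Cl 0 {A}) (H ++ [(Sg, Pg, d)]) Γ Δ Dir.up 0 {A}
                le_rfl hOkG hOkD OkM.zero hOkA hP2
              rcases hrec with ⟨Γ', Δ', hOkG', hOkD', hsubG, hsubD, hclt, hncon'⟩ |
                ⟨T, hgT, hlG, hlD⟩
              · have hres := ihm (capM Cl Γ' Δ') (lt_of_lt_of_le hclt hcap) H Sg Pg d Γ' Δ'
                  le_rfl hOkS hOkP hOkG' hOkD' hncon'
                exact hres.mono hsubG hsubD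
              · refine ihl (acc ++ [(Dir.up, T)]) ?_ ?_ ?_
                · intro c hc
                  rcases List.mem_append.mp hc with hc | hc
                  · exact hacc c hc
                  · rw [List.mem_singleton] at hc
                    subst hc
                    exact hgT
                · intro B hB
                  rcases hcov1 B hB with hin | h | h
                  · rcases List.mem_cons.mp hin with heq | hin
                    · have hBA : B = A := by injection heq
                      subst hBA
                      exact Or.inr (Or.inr ⟨(Dir.up, T),
                        List.mem_append_right _ (List.mem_singleton_self _), rfl,
                        hlD B (Multiset.mem_singleton_self B)⟩)
                    · exact Or.inl hin
                  · exact Or.inr (Or.inl h)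
                  · obtain ⟨c, hcmem, hcd, hAc⟩ := h
                    exact Or.inr (Or.inr ⟨c, List.mem_append_left _ hcmem, hcd, hAc⟩)
                · intro B hB
                  rcases hcov2 B hB with hin | h | h
                  · rcases List.mem_cons.mp hin with heq | hin
                    · exact Formula.noConfusion heq
                    · exact Or.inl hin
                  · exact Or.inr (Or.inl h)
                  · obtain ⟨c, hcmem, hcd, hAc⟩ := h
                    exact Or.inr (Or.inr ⟨c, List.mem_append_left _ hcmem, hcd, hAc⟩)
            · -- flow back : grow the parent
              left
              refine ⟨Sg, A ::ₘ Pg, hOkS, OkM.cons hACl (by omega) hOkP,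
                fun B hB => hB, fun B hB => Multiset.mem_cons_of_mem hB,
                capM_cons_right_lt Cl Sg Pg hACl hAPn, hncon⟩
        · -- stale entry : □A no longer relevant (it is in Δ though, always; junk case)
          refine ihl acc hacc ?_ ?_
          · intro B hB
            rcases hcov1 B hB with hin | h | h
            · rcases List.mem_cons.mp hin with heq | hin
              · have hBA : B = A := by injection heq
                subst hBA
                exact absurd hB hmem
              · exact Or.inl hin
            · exact Or.inr (Or.inl h)
            · exact Or.inr (Or.inr h)
          · intro B hB
            rcases hcov2 B hB with hin | h | h
            · rcases List.mem_cons.mp hin with heq | hin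
              · exact Formula.noConfusion heq
              · exact Or.inl hin
            · exact Or.inr (Or.inl h)
            · exact Or.inr (Or.inr h)
      · by_cases hCbbox : ∃ A : Formula, C = A.bbox
        · obtain ⟨A, rfl⟩ := hCbbox
          by_cases hmem : A.bbox ∈ Δ
          · by_cases hflag : (d = Dir.up ∧ A ∈ Pg) ∨ (∃ c ∈ acc, c.1 = Dir.dn ∧ A ∈ c.2.Dm)
            · refine ihl acc hacc ?_ ?_
              · intro B hB
                rcases hcov1 B hB with hin | h | h
                · rcases List.mem_cons.mp hin with heq | hin
                  · exact Formula.noConfusion heq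
                  · exact Or.inl hin
                · exact Or.inr (Or.inl h)
                · exact Or.inr (Or.inr h)
              · intro B hB
                rcases hcov2 B hB with hin | h | h
                · rcases List.mem_cons.mp hin with heq | hin
                  · have hBA : B = A := by injection heq
                    subst hBA
                    rcases hflag with h | h
                    · exact Or.inr (Or.inl h)
                    · exact Or.inr (Or.inr h)
                  · exact Or.inl hin
                · exact Or.inr (Or.inl h)
                · exact Or.inr (Or.inr h)
            · -- really process the need ■A ∈ Δ
              have hACl : A ∈ Cl := hCl _ (hOkD _ hmem).1 A (Formula.mem_subf_bbox A)
              have hk1 : 1 ≤ k := by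
                have := (hOkD _ hmem).2
                simp only [Formula.mdepth] at this
                omega
              have hAd : A.mdepth ≤ k - 1 := by
                have := (hOkD _ hmem).2
                simp only [Formula.mdepth] at this
                omega
              have e : Formula.bbox A ::ₘ Δ.erase (Formula.bbox A) = Δ :=
                Multiset.cons_erase hmem
              have hstep :
                  (¬ Deriv (plug ((H ++ [(Sg, Pg, d)]) ++ [(Γ, Δ, Dir.dn)]) (.single 0 {A}))) ∨
                  (d = Dir.up ∧ A ∉ Pg ∧ ¬ Deriv (plug H (.single Sg (A ::ₘ Pg)))) := by
                cases d with
                | dn =>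
                  left
                  intro hp
                  refine Hcon ?_
                  have hlast : lastDir (H ++ [(Sg, Pg, Dir.dn)]) ≠ some Dir.up := by
                    rw [lastDir_append]
                    simp
                  have hrule := Deriv.bboxR2 (H ++ [(Sg, Pg, Dir.dn)]) Γ
                    (Δ.erase (Formula.bbox A)) A hlast (by
                      rw [e]
                      rw [plug_snoc_dn (H ++ [(Sg, Pg, Dir.dn)])] at hp
                      exact hp)
                  rwa [e] at hrule
                | up =>
                  by_cases hp1 : Deriv (plug H (.up Sg (A ::ₘ Pg) (.single Γ Δ)))
                  · left
                    intro hp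
                    refine Hcon ?_
                    rw [plug_snoc_up]
                    have hrule := Deriv.bboxR1 H Sg Pg Γ (Δ.erase (Formula.bbox A)) A
                      (by rw [e]; exact hp1)
                      (by
                        rw [e]
                        rw [plug_snoc_dn (H ++ [(Sg, Pg, Dir.up)]), plug_snoc_up] at hp
                        exact hp)
                    rwa [e] at hrule
                  · right
                    have hAP : A ∉ Pg := fun hAP => hflag (Or.inl ⟨rfl, hAP⟩)
                    refine ⟨rfl, hAP, ?_⟩
                    intro hp
                    refine hp1 ?_
                    have := Deriv.ew H Sg (A ::ₘ Pg) Dir.up Γ Δ hp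
                    rwa [plug_snoc_up] at this
              rcases hstep with hP2 | ⟨hdd, hAPn, hncon⟩
              · obtain ⟨k', rfl⟩ : ∃ k', k = k' + 1 := ⟨k - 1, by omega⟩
                have hOkA : OkM Cl k' {A} := by
                  intro B hB
                  rw [Multiset.mem_singleton] at hB
                  subst hB
                  exact ⟨hACl, by omega⟩
                have hrec := ihk k' (by omega) (capM Cl 0 {A}) (H ++ [(Sg, Pg, d)]) Γ Δ Dir.dn 0 {A}
                  le_rfl hOkG hOkD OkM.zero hOkA hP2
                rcases hrec with ⟨Γ', Δ', hOkG', hOkD', hsubG, hsubD, hclt, hncon'⟩ |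
                  ⟨T, hgT, hlG, hlD⟩
                · have hres := ihm (capM Cl Γ' Δ') (lt_of_lt_of_le hclt hcap) H Sg Pg d Γ' Δ'
                    le_rfl hOkS hOkP hOkG' hOkD' hncon'
                  exact hres.mono hsubG hsubD
                · refine ihl (acc ++ [(Dir.dn, T)]) ?_ ?_ ?_
                  · intro c hc
                    rcases List.mem_append.mp hc with hc | hc
                    · exact hacc c hc
                    · rw [List.mem_singleton] at hc
                      subst hc
                      exact hgT
                  · intro B hB
                    rcases hcov1 B hB with hin | h | h
                    · rcases List.mem_cons.mp hin with heq | hin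
                      · exact Formula.noConfusion heq
                      · exact Or.inl hin
                    · exact Or.inr (Or.inl h)
                    · obtain ⟨c, hcmem, hcd, hAc⟩ := h
                      exact Or.inr (Or.inr ⟨c, List.mem_append_left _ hcmem, hcd, hAc⟩)
                  · intro B hB
                    rcases hcov2 B hB with hin | h | h
                    · rcases List.mem_cons.mp hin with heq | hin
                      · have hBA : B = A := by injection heq
                        subst hBA
                        exact Or.inr (Or.inr ⟨(Dir.dn, T),
                          List.mem_append_right _ (List.mem_singleton_self _), rfl,
                          hlD B (Multiset.mem_singleton_self B)⟩)
                      · exact Or.inl hin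
                    · exact Or.inr (Or.inl h)
                    · obtain ⟨c, hcmem, hcd, hAc⟩ := h
                      exact Or.inr (Or.inr ⟨c, List.mem_append_left _ hcmem, hcd, hAc⟩)
              · left
                refine ⟨Sg, A ::ₘ Pg, hOkS, OkM.cons hACl (by omega) hOkP,
                  fun B hB => hB, fun B hB => Multiset.mem_cons_of_mem hB,
                  capM_cons_right_lt Cl Sg Pg hACl hAPn, hncon⟩
          · refine ihl acc hacc ?_ ?_
            · intro B hB
              rcases hcov1 B hB with hin | h | h
              · rcases List.mem_cons.mp hin with heq | hin
                · exact Formula.noConfusion heq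
                · exact Or.inl hin
              · exact Or.inr (Or.inl h)
              · exact Or.inr (Or.inr h)
            · intro B hB
              rcases hcov2 B hB with hin | h | h
              · rcases List.mem_cons.mp hin with heq | hin
                · have hBA : B = A := by injection heq
                  subst hBA
                  exact absurd hB hmem
                · exact Or.inl hin
              · exact Or.inr (Or.inl h)
              · exact Or.inr (Or.inr h)
        · -- C is neither a box nor a bbox : skip
          refine ihl acc hacc ?_ ?_
          · intro B hB
            rcases hcov1 B hB with hin | h | h
            · rcases List.mem_cons.mp hin with heq | hin
              · exact absurd ⟨B, heq.symm⟩ hCbox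
              · exact Or.inl hin
            · exact Or.inr (Or.inl h)
            · exact Or.inr (Or.inr h)
          · intro B hB
            rcases hcov2 B hB with hin | h | h
            · rcases List.mem_cons.mp hin with heq | hin
              · exact absurd ⟨B, heq.symm⟩ hCbbox
              · exact Or.inl hin
            · exact Or.inr (Or.inl h)
            · exact Or.inr (Or.inr h)
  exact aux Δ.toList [] (fun c hc => absurd hc List.not_mem_nil)
    (fun A hA => Or.inl (Multiset.mem_toList.mpr hA))
    (fun A hA => Or.inl (Multiset.mem_toList.mpr hA))
theorem top_main (Cl : Finset Formula)
    (hCl : ∀ A ∈ Cl, ∀ B ∈ A.subf, B ∈ Cl) (hND : ∀ A ∈ Cl, A.NoDia) :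
    ∀ (K m : ℕ) (Γ Δ : Multiset Formula),
      capM Cl Γ Δ ≤ m →
      OkM Cl K Γ → OkM Cl K Δ →
      ¬ Deriv (.single Γ Δ) →
      ∃ T : PT, Good none T ∧ (∀ A ∈ Γ, A ∈ T.Gm) ∧ (∀ A ∈ Δ, A ∈ T.Dm) := by
  intro K m
  induction m using Nat.strong_induction_on with
  | _ m ihm =>
  intro Γ Δ hcap hOkG hOkD Hcon
  have Hcon' : ¬ Deriv (plug [] (.single Γ Δ)) := Hcon
  by_cases h1 : Formula.bot ∈ Γ
  · refine absurd ?_ Hcon'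
    have hrule := Deriv.botL [] (Γ.erase Formula.bot) Δ
    rwa [Multiset.cons_erase h1] at hrule
  by_cases h2 : ∃ p : ℕ, Formula.atom p ∈ Γ ∧ Formula.atom p ∈ Δ
  · obtain ⟨p, hpG, hpD⟩ := h2
    refine absurd ?_ Hcon'
    have hrule := Deriv.id [] (Γ.erase (Formula.atom p)) (Δ.erase (Formula.atom p)) p
    rwa [Multiset.cons_erase hpG, Multiset.cons_erase hpD] at hrule
  by_cases h3 : ∃ A B : Formula, A.imp B ∈ Γ ∧ B ∉ Γ ∧ A ∉ Δ
  · obtain ⟨A, B, hmem, hBn, hAn⟩ := h3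
    have hABCl : A.imp B ∈ Cl := (hOkG _ hmem).1
    have hACl : A ∈ Cl := hCl _ hABCl A (Formula.mem_subf_imp_left A B)
    have hBCl : B ∈ Cl := hCl _ hABCl B (Formula.mem_subf_imp_right A B)
    have hAd : A.mdepth ≤ K := le_trans (Formula.mdepth_imp_left A B) (hOkG _ hmem).2
    have hBd : B.mdepth ≤ K := le_trans (Formula.mdepth_imp_right A B) (hOkG _ hmem).2
    have e : A.imp B ::ₘ Γ.erase (A.imp B) = Γ := Multiset.cons_erase hmem
    by_cases hd1 : Deriv (plug [] (.single (B ::ₘ Γ) Δ))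
    · have hd2 : ¬ Deriv (plug [] (.single Γ (A ::ₘ Δ))) := by
        intro hd2
        refine Hcon' ?_
        have hrule := Deriv.impL [] (Γ.erase (A.imp B)) Δ A B
          (by rw [e]; exact hd1) (by rw [e]; exact hd2)
        rwa [e] at hrule
      have hcap' : capM Cl Γ (A ::ₘ Δ) < capM Cl Γ Δ := capM_cons_right_lt Cl Γ Δ hACl hAn
      obtain ⟨T, hg, hlG, hlD⟩ := ihm (capM Cl Γ (A ::ₘ Δ)) (lt_of_lt_of_le hcap' hcap) Γ
        (A ::ₘ Δ) le_rfl hOkG (OkM.cons hACl hAd hOkD) hd2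
      exact ⟨T, hg, hlG, fun C hC => hlD C (Multiset.mem_cons_of_mem hC)⟩
    · have hcap' : capM Cl (B ::ₘ Γ) Δ < capM Cl Γ Δ := capM_cons_left_lt Cl Γ Δ hBCl hBn
      obtain ⟨T, hg, hlG, hlD⟩ := ihm (capM Cl (B ::ₘ Γ) Δ) (lt_of_lt_of_le hcap' hcap)
        (B ::ₘ Γ) Δ le_rfl (OkM.cons hBCl hBd hOkG) hOkD hd1
      exact ⟨T, hg, fun C hC => hlG C (Multiset.mem_cons_of_mem hC), hlD⟩
  by_cases h4 : ∃ A B : Formula, A.imp B ∈ Δ ∧ ¬ (A ∈ Γ ∧ B ∈ Δ)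
  · obtain ⟨A, B, hmem, hn⟩ := h4
    have hABCl : A.imp B ∈ Cl := (hOkD _ hmem).1
    have hACl : A ∈ Cl := hCl _ hABCl A (Formula.mem_subf_imp_left A B)
    have hBCl : B ∈ Cl := hCl _ hABCl B (Formula.mem_subf_imp_right A B)
    have hAd : A.mdepth ≤ K := le_trans (Formula.mdepth_imp_left A B) (hOkD _ hmem).2
    have hBd : B.mdepth ≤ K := le_trans (Formula.mdepth_imp_right A B) (hOkD _ hmem).2
    have e : A.imp B ::ₘ Δ.erase (A.imp B) = Δ := Multiset.cons_erase hmem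
    have hprem : ¬ Deriv (plug [] (.single (A ::ₘ Γ) (B ::ₘ Δ))) := by
      intro hp
      refine Hcon' ?_
      have hrule := Deriv.impR [] Γ (Δ.erase (A.imp B)) A B (by rw [e]; exact hp)
      rwa [e] at hrule
    have hcap' : capM Cl (A ::ₘ Γ) (B ::ₘ Δ) < capM Cl Γ Δ := by
      by_cases hA : A ∈ Γ
      · have hBn : B ∉ Δ := fun hB => hn ⟨hA, hB⟩
        rw [capM_cons_left_mem hA]
        exact capM_cons_right_lt Cl Γ Δ hBCl hBn
      · calc capM Cl (A ::ₘ Γ) (B ::ₘ Δ) ≤ capM Cl (A ::ₘ Γ) Δ :=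
              capM_cons_right_le Cl (A ::ₘ Γ) Δ B
          _ < capM Cl Γ Δ := capM_cons_left_lt Cl Γ Δ hACl hA
    obtain ⟨T, hg, hlG, hlD⟩ := ihm (capM Cl (A ::ₘ Γ) (B ::ₘ Δ)) (lt_of_lt_of_le hcap' hcap)
      (A ::ₘ Γ) (B ::ₘ Δ) le_rfl (OkM.cons hACl hAd hOkG) (OkM.cons hBCl hBd hOkD) hprem
    exact ⟨T, hg, fun C hC => hlG C (Multiset.mem_cons_of_mem hC),
      fun C hC => hlD C (Multiset.mem_cons_of_mem hC)⟩
  -- saturated: process modal needs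
  have aux : ∀ (ℓ : List Formula) (acc : List (Dir × PT)),
      (∀ c ∈ acc, Good (some (c.1, Γ, Δ)) c.2) →
      (∀ A : Formula, A.box ∈ Δ → A.box ∈ ℓ ∨ (∃ c ∈ acc, c.1 = Dir.up ∧ A ∈ c.2.Dm)) →
      (∀ A : Formula, A.bbox ∈ Δ → A.bbox ∈ ℓ ∨ (∃ c ∈ acc, c.1 = Dir.dn ∧ A ∈ c.2.Dm)) →
      ∃ T : PT, Good none T ∧ (∀ A ∈ Γ, A ∈ T.Gm) ∧ (∀ A ∈ Δ, A ∈ T.Dm) := by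
    intro ℓ
    induction ℓ with
    | nil =>
      intro acc hacc hcov1 hcov2
      refine ⟨PT.mk Γ Δ acc, ?_, fun A hA => hA, fun A hA => hA⟩
      refine Good.mk _ Γ Δ acc
        (fun A hA => hND A (hOkG A hA).1)
        (fun A hA => hND A (hOkD A hA).1)
        (fun p hpG hpD => h2 ⟨p, hpG, hpD⟩)
        h1 ?_ ?_ trivial ?_ ?_ hacc
      · intro A B hmem
        by_cases hB : B ∈ Γ
        · exact Or.inl hB
        by_cases hA : A ∈ Δ
        · exact Or.inr hA
        exact absurd ⟨A, B, hmem, hB, hA⟩ h3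
      · intro A B hmem
        by_cases hAB : A ∈ Γ ∧ B ∈ Δ
        · exact hAB
        exact absurd ⟨A, B, hmem, hAB⟩ h4
      · intro A hA
        rcases hcov1 A hA with hin | ⟨c, hcmem, hcd, hAc⟩
        · exact absurd hin List.not_mem_nil
        · exact Or.inr ⟨c, hcmem, hcd, hAc⟩
      · intro A hA
        rcases hcov2 A hA with hin | ⟨c, hcmem, hcd, hAc⟩
        · exact absurd hin List.not_mem_nil
        · exact Or.inr ⟨c, hcmem, hcd, hAc⟩
    | cons C ℓ ihl =>
      intro acc hacc hcov1 hcov2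
      by_cases hCbox : ∃ A : Formula, C = A.box
      · obtain ⟨A, rfl⟩ := hCbox
        by_cases hmem : A.box ∈ Δ
        · by_cases hflag : ∃ c ∈ acc, c.1 = Dir.up ∧ A ∈ c.2.Dm
          · refine ihl acc hacc ?_ ?_
            · intro B hB
              rcases hcov1 B hB with hin | h
              · rcases List.mem_cons.mp hin with heq | hin
                · have hBA : B = A := by injection heq
                  subst hBA
                  exact Or.inr hflag
                · exact Or.inl hin
              · exact Or.inr h
            · intro B hB
              rcases hcov2 B hB with hin | h
              · rcases List.mem_cons.mp hin with heq | hin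
                · exact Formula.noConfusion heq
                · exact Or.inl hin
              · exact Or.inr h
          · have hACl : A ∈ Cl := hCl _ (hOkD _ hmem).1 A (Formula.mem_subf_box A)
            have hk1 : 1 ≤ K := by
              have := (hOkD _ hmem).2
              simp only [Formula.mdepth] at this
              omega
            have hAd : A.mdepth ≤ K - 1 := by
              have := (hOkD _ hmem).2
              simp only [Formula.mdepth] at this
              omega
            have e : Formula.box A ::ₘ Δ.erase (Formula.box A) = Δ := Multiset.cons_erase hmem
            have hP2 : ¬ Deriv (plug ([] ++ [(Γ, Δ, Dir.up)]) (.single 0 {A})) := by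
              intro hp
              refine Hcon' ?_
              have hlast : lastDir ([] : Ctx) ≠ some Dir.dn := by simp [lastDir]
              have hrule := Deriv.boxR2 [] Γ (Δ.erase (Formula.box A)) A hlast (by
                rw [e]
                rw [plug_snoc_up []] at hp
                exact hp)
              rwa [e] at hrule
            obtain ⟨K', rfl⟩ : ∃ K', K = K' + 1 := ⟨K - 1, by omega⟩
            have hOkA : OkM Cl K' {A} := by
              intro B hB
              rw [Multiset.mem_singleton] at hB
              subst hB
              exact ⟨hACl, by omega⟩
            have hrec := rec_main Cl hCl hND K' (capM Cl 0 {A}) [] Γ Δ Dir.up 0 {A}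
              le_rfl hOkG hOkD OkM.zero hOkA hP2
            rcases hrec with ⟨Γ', Δ', hOkG', hOkD', hsubG, hsubD, hclt, hncon'⟩ |
              ⟨T, hgT, hlG, hlD⟩
            · obtain ⟨T, hg, hlG, hlD⟩ := ihm (capM Cl Γ' Δ') (lt_of_lt_of_le hclt hcap) Γ' Δ'
                le_rfl hOkG' hOkD' hncon'
              exact ⟨T, hg, fun B hB => hlG B (hsubG B hB), fun B hB => hlD B (hsubD B hB)⟩
            · refine ihl (acc ++ [(Dir.up, T)]) ?_ ?_ ?_
              · intro c hc
                rcases List.mem_append.mp hc with hc | hc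
                · exact hacc c hc
                · rw [List.mem_singleton] at hc
                  subst hc
                  exact hgT
              · intro B hB
                rcases hcov1 B hB with hin | h
                · rcases List.mem_cons.mp hin with heq | hin
                  · have hBA : B = A := by injection heq
                    subst hBA
                    exact Or.inr ⟨(Dir.up, T),
                      List.mem_append_right _ (List.mem_singleton_self _), rfl,
                      hlD B (Multiset.mem_singleton_self B)⟩
                  · exact Or.inl hin
                · obtain ⟨c, hcmem, hcd, hAc⟩ := h
                  exact Or.inr ⟨c, List.mem_append_left _ hcmem, hcd, hAc⟩
              · intro B hB
                rcases hcov2 B hB with hin | h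
                · rcases List.mem_cons.mp hin with heq | hin
                  · exact Formula.noConfusion heq
                  · exact Or.inl hin
                · obtain ⟨c, hcmem, hcd, hAc⟩ := h
                  exact Or.inr ⟨c, List.mem_append_left _ hcmem, hcd, hAc⟩
        · refine ihl acc hacc ?_ ?_
          · intro B hB
            rcases hcov1 B hB with hin | h
            · rcases List.mem_cons.mp hin with heq | hin
              · have hBA : B = A := by injection heq
                subst hBA
                exact absurd hB hmem
              · exact Or.inl hin
            · exact Or.inr h
          · intro B hB
            rcases hcov2 B hB with hin | h
            · rcases List.mem_cons.mp hin with heq | hin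
              · exact Formula.noConfusion heq
              · exact Or.inl hin
            · exact Or.inr h
      · by_cases hCbbox : ∃ A : Formula, C = A.bbox
        · obtain ⟨A, rfl⟩ := hCbbox
          by_cases hmem : A.bbox ∈ Δ
          · by_cases hflag : ∃ c ∈ acc, c.1 = Dir.dn ∧ A ∈ c.2.Dm
            · refine ihl acc hacc ?_ ?_
              · intro B hB
                rcases hcov1 B hB with hin | h
                · rcases List.mem_cons.mp hin with heq | hin
                  · exact Formula.noConfusion heq
                  · exact Or.inl hin
                · exact Or.inr h
              · intro B hB
                rcases hcov2 B hB with hin | h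
                · rcases List.mem_cons.mp hin with heq | hin
                  · have hBA : B = A := by injection heq
                    subst hBA
                    exact Or.inr hflag
                  · exact Or.inl hin
                · exact Or.inr h
            · have hACl : A ∈ Cl := hCl _ (hOkD _ hmem).1 A (Formula.mem_subf_bbox A)
              have hk1 : 1 ≤ K := by
                have := (hOkD _ hmem).2
                simp only [Formula.mdepth] at this
                omega
              have hAd : A.mdepth ≤ K - 1 := by
                have := (hOkD _ hmem).2
                simp only [Formula.mdepth] at this
                omega
              have e : Formula.bbox A ::ₘ Δ.erase (Formula.bbox A) = Δ :=
                Multiset.cons_erase hmem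
              have hP2 : ¬ Deriv (plug ([] ++ [(Γ, Δ, Dir.dn)]) (.single 0 {A})) := by
                intro hp
                refine Hcon' ?_
                have hlast : lastDir ([] : Ctx) ≠ some Dir.up := by simp [lastDir]
                have hrule := Deriv.bboxR2 [] Γ (Δ.erase (Formula.bbox A)) A hlast (by
                  rw [e]
                  rw [plug_snoc_dn []] at hp
                  exact hp)
                rwa [e] at hrule
              obtain ⟨K', rfl⟩ : ∃ K', K = K' + 1 := ⟨K - 1, by omega⟩
              have hOkA : OkM Cl K' {A} := by
                intro B hB
                rw [Multiset.mem_singleton] at hB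
                subst hB
                exact ⟨hACl, by omega⟩
              have hrec := rec_main Cl hCl hND K' (capM Cl 0 {A}) [] Γ Δ Dir.dn 0 {A}
                le_rfl hOkG hOkD OkM.zero hOkA hP2
              rcases hrec with ⟨Γ', Δ', hOkG', hOkD', hsubG, hsubD, hclt, hncon'⟩ |
                ⟨T, hgT, hlG, hlD⟩
              · obtain ⟨T, hg, hlG, hlD⟩ := ihm (capM Cl Γ' Δ') (lt_of_lt_of_le hclt hcap) Γ' Δ'
                  le_rfl hOkG' hOkD' hncon'
                exact ⟨T, hg, fun B hB => hlG B (hsubG B hB), fun B hB => hlD B (hsubD B hB)⟩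
              · refine ihl (acc ++ [(Dir.dn, T)]) ?_ ?_ ?_
                · intro c hc
                  rcases List.mem_append.mp hc with hc | hc
                  · exact hacc c hc
                  · rw [List.mem_singleton] at hc
                    subst hc
                    exact hgT
                · intro B hB
                  rcases hcov1 B hB with hin | h
                  · rcases List.mem_cons.mp hin with heq | hin
                    · exact Formula.noConfusion heq
                    · exact Or.inl hin
                  · obtain ⟨c, hcmem, hcd, hAc⟩ := h
                    exact Or.inr ⟨c, List.mem_append_left _ hcmem, hcd, hAc⟩
                · intro B hB
                  rcases hcov2 B hB with hin | h
                  · rcases List.mem_cons.mp hin with heq | hin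
                    · have hBA : B = A := by injection heq
                      subst hBA
                      exact Or.inr ⟨(Dir.dn, T),
                        List.mem_append_right _ (List.mem_singleton_self _), rfl,
                        hlD B (Multiset.mem_singleton_self B)⟩
                    · exact Or.inl hin
                  · obtain ⟨c, hcmem, hcd, hAc⟩ := h
                    exact Or.inr ⟨c, List.mem_append_left _ hcmem, hcd, hAc⟩
          · refine ihl acc hacc ?_ ?_
            · intro B hB
              rcases hcov1 B hB with hin | h
              · rcases List.mem_cons.mp hin with heq | hin
                · exact Formula.noConfusion heq
                · exact Or.inl hin
              · exact Or.inr h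
            · intro B hB
              rcases hcov2 B hB with hin | h
              · rcases List.mem_cons.mp hin with heq | hin
                · have hBA : B = A := by injection heq
                  subst hBA
                  exact absurd hB hmem
                · exact Or.inl hin
              · exact Or.inr h
        · refine ihl acc hacc ?_ ?_
          · intro B hB
            rcases hcov1 B hB with hin | h
            · rcases List.mem_cons.mp hin with heq | hin
              · exact absurd ⟨B, heq.symm⟩ hCbox
              · exact Or.inl hin
            · exact Or.inr h
          · intro B hB
            rcases hcov2 B hB with hin | h
            · rcases List.mem_cons.mp hin with heq | hin
              · exact absurd ⟨B, heq.symm⟩ hCbbox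
              · exact Or.inl hin
            · exact Or.inr h
  exact aux Δ.toList [] (fun c hc => absurd hc List.not_mem_nil)
    (fun A hA => Or.inl (Multiset.mem_toList.mpr hA))
    (fun A hA => Or.inl (Multiset.mem_toList.mpr hA))
/-- Adequacy of LNS_Kt: for formulas built from atoms, ⊥, →, □, ■, derivability
of `ε ⇒ φ` coincides with validity of `φ`. -/
theorem lnskt_adequate (φ : Formula) (hφ : φ.NoDia) :
    Deriv (LNS.single 0 {φ}) ↔ Valid φ := by
  constructor
  · intro h W hW R V w
    have hs := deriv_sound h W R V w
    simp only [tau] at hs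
    have h2 := hs (force_bigAnd.mpr (by intro A hA; simp at hA))
    rcases force_bigOr.mp h2 with ⟨A, hA, hf⟩
    rw [Multiset.mem_singleton] at hA
    subst hA
    exact hf
  · intro hv
    by_contra hnd
    have hCl : ∀ A ∈ φ.subf, ∀ B ∈ A.subf, B ∈ φ.subf :=
      fun A hA B hB => Formula.subf_subset φ A hA hB
    have hND : ∀ A ∈ φ.subf, A.NoDia := fun A hA => Formula.noDia_of_subf φ A hφ hA
    have hOkD : OkM φ.subf φ.mdepth {φ} := by
      intro A hA
      rw [Multiset.mem_singleton] at hA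
      rw [hA]
      exact ⟨Formula.mem_subf_self φ, le_rfl⟩
    obtain ⟨T, hg, _, hlD⟩ := top_main φ.subf hCl hND φ.mdepth (capM φ.subf 0 {φ}) 0 {φ}
      le_rfl OkM.zero hOkD hnd
    let root : Wd T := ⟨[], ⟨T, rfl⟩⟩
    have hroot : nodeAt T root = T := nodeAt_eq T rfl
    have ht := (truth T hg φ root).2
      (by rw [hroot]; exact hlD φ (Multiset.mem_singleton_self φ))
    exact ht (hv (Wd T) ⟨root⟩ (RelT T) (ValT T) root)
end

section
/- (Admissibility of left contraction in LNS_Kt) For all multisets Γ, Δ, every formula A, and all (possibly empty) contexts G, H: if G ⇗ Γ,A,A ⇒ Δ ⇗ H is derivable in LNS_Kt, then G ⇗ Γ,A ⇒ Δ ⇗ H is derivable in LNS_Kt (with the same structural connectives ⇗ ∈ {↗,↙} in both sequents). -/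
/-- A trailing context: a list of components, each preceded by the structural
connective joining it to what comes before. -/
abbrev TCtx := List (Dir × Multiset Formula × Multiset Formula)

/-- `withTail Γ Δ H` is the linear nested sequent `(Γ ⇒ Δ) ⇗ H`. -/
def withTail : Multiset Formula → Multiset Formula → TCtx → LNS
  | Γ, Δ, [] => .single Γ Δ
  | Γ, Δ, (Dir.up, Θ, Λ) :: H => .up Γ Δ (withTail Θ Λ H)
  | Γ, Δ, (Dir.dn, Θ, Λ) :: H => .dn Γ Δ (withTail Θ Λ H)

/-- One contraction step on a multiset (antecedent). -/
def CM (Γ Γ' : Multiset Formula) : Prop :=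
  ∃ A X, Γ = A ::ₘ A ::ₘ X ∧ Γ' = A ::ₘ X

theorem CM_cons_left {Γ Γ' : Multiset Formula} (B : Formula) (h : CM Γ Γ') :
    CM (B ::ₘ Γ) (B ::ₘ Γ') := by
  obtain ⟨A, X, rfl, rfl⟩ := h
  refine ⟨A, B ::ₘ X, ?_, ?_⟩
  · rw [Multiset.cons_swap B A, Multiset.cons_swap B A]
  · rw [Multiset.cons_swap]

theorem CM_mem {Γ Γ' : Multiset Formula} {a : Formula} (h : CM Γ Γ') (ha : a ∈ Γ) :
    a ∈ Γ' := by
  obtain ⟨A, X, rfl, rfl⟩ := h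
  simp only [Multiset.mem_cons] at ha ⊢
  tauto

/-- One contraction step somewhere in an antecedent of an LNS. -/
inductive CS : LNS → LNS → Prop
  | single {Γ Γ' Δ} : CM Γ Γ' → CS (.single Γ Δ) (.single Γ' Δ)
  | upHere {Γ Γ' Δ S} : CM Γ Γ' → CS (.up Γ Δ S) (.up Γ' Δ S)
  | dnHere {Γ Γ' Δ S} : CM Γ Γ' → CS (.dn Γ Δ S) (.dn Γ' Δ S)
  | upThere {Γ Δ S S'} : CS S S' → CS (.up Γ Δ S) (.up Γ Δ S')
  | dnThere {Γ Δ S S'} : CS S S' → CS (.dn Γ Δ S) (.dn Γ Δ S')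

/-- One contraction step somewhere in an antecedent of a context. -/
inductive CG : Ctx → Ctx → Prop
  | here {Γ Γ' : Multiset Formula} {Δ d G} : CM Γ Γ' → CG ((Γ, Δ, d) :: G) ((Γ', Δ, d) :: G)
  | there {c G G'} : CG G G' → CG (c :: G) (c :: G')

theorem CG_shape {G G' : Ctx} (h : CG G G') :
    (∃ a l, G = a :: l) ∧ (∃ a l, G' = a :: l) := by
  cases h <;> exact ⟨⟨_, _, rfl⟩, ⟨_, _, rfl⟩⟩

theorem lastDir_CG {G G' : Ctx} (h : CG G G') : lastDir G' = lastDir G := by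
  induction h with
  | @here Γ Γ' Δ d G _ =>
    cases G with
    | nil => rfl
    | cons c l => rfl
  | @there c G G' h ih =>
    obtain ⟨⟨a, l, rfl⟩, ⟨a', l', rfl⟩⟩ := CG_shape h
    exact ih

theorem CS_of_CG {G G' : Ctx} (h : CG G G') (S : LNS) : CS (plug G S) (plug G' S) := by
  induction h with
  | @here Γ Γ' Δ d G cm =>
    cases d
    · exact CS.upHere cm
    · exact CS.dnHere cm
  | @there c G G' h ih =>
    obtain ⟨Γ, Δ, d⟩ := c
    cases d
    · exact CS.upThere ih
    · exact CS.dnThere ih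

theorem CS_plug {S S' : LNS} (h : CS S S') (G : Ctx) : CS (plug G S) (plug G S') := by
  induction G with
  | nil => exact h
  | cons c G ih =>
    obtain ⟨Γ, Δ, d⟩ := c
    cases d
    · exact CS.upThere ih
    · exact CS.dnThere ih

deriving instance DecidableEq for Formula

theorem CS_plug_cases :
    ∀ (G : Ctx) (S : LNS) {T : LNS}, CS (plug G S) T →
      (∃ G', CG G G' ∧ T = plug G' S) ∨ (∃ S', CS S S' ∧ T = plug G S') := by
  intro G
  induction G with
  | nil => intro S T h; exact Or.inr ⟨T, h, rfl⟩
  | cons c G ih =>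
    obtain ⟨Γ, Δ, d⟩ := c
    intro S T h
    cases d with
    | up =>
      cases h with
      | upHere cm => exact Or.inl ⟨(_, Δ, Dir.up) :: G, CG.here cm, rfl⟩
      | upThere h' =>
        rcases ih S h' with ⟨G', hG, rfl⟩ | ⟨S', hS, rfl⟩
        · exact Or.inl ⟨(Γ, Δ, Dir.up) :: G', CG.there hG, rfl⟩
        · exact Or.inr ⟨S', hS, rfl⟩
    | dn =>
      cases h with
      | dnHere cm => exact Or.inl ⟨(_, Δ, Dir.dn) :: G, CG.here cm, rfl⟩
      | dnThere h' =>
        rcases ih S h' with ⟨G', hG, rfl⟩ | ⟨S', hS, rfl⟩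
        · exact Or.inl ⟨(Γ, Δ, Dir.dn) :: G', CG.there hG, rfl⟩
        · exact Or.inr ⟨S', hS, rfl⟩

theorem CG_snoc_cases {Θ Λ : Multiset Formula} {d : Dir} :
    ∀ (G : Ctx) {G₂ : Ctx}, CG (G ++ [(Θ, Λ, d)]) G₂ →
      (∃ G', CG G G' ∧ G₂ = G' ++ [(Θ, Λ, d)]) ∨
      (∃ Θ', CM Θ Θ' ∧ G₂ = G ++ [(Θ', Λ, d)]) := by
  intro G
  induction G with
  | nil =>
    intro G₂ h
    cases h with
    | here cm => exact Or.inr ⟨_, cm, rfl⟩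
    | there h' => cases h'
  | cons c G ih =>
    intro G₂ h
    cases h with
    | here cm => exact Or.inl ⟨_, CG.here cm, rfl⟩
    | there h' =>
      rcases ih h' with ⟨G', hG, rfl⟩ | ⟨Θ', cm, rfl⟩
      · exact Or.inl ⟨c :: G', CG.there hG, rfl⟩
      · exact Or.inr ⟨Θ', cm, rfl⟩

theorem Deriv.CS_closed : ∀ {S : LNS}, Deriv S → ∀ {T : LNS}, CS S T → Deriv T := by
  intro S h
  induction h with
  | id G Γ Δ p =>
    intro T hT
    rcases CS_plug_cases G _ hT with ⟨G', _, rfl⟩ | ⟨S', hS, rfl⟩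
    · exact Deriv.id G' Γ Δ p
    · cases hS with
      | single cm =>
        rename_i Γ'
        have hm : Formula.atom p ∈ Γ' := CM_mem cm (Multiset.mem_cons_self _ _)
        rw [show Γ' = Formula.atom p ::ₘ Γ'.erase (.atom p) from (Multiset.cons_erase hm).symm]
        exact Deriv.id G _ Δ p
  | botL G Γ Δ =>
    intro T hT
    rcases CS_plug_cases G _ hT with ⟨G', _, rfl⟩ | ⟨S', hS, rfl⟩
    · exact Deriv.botL G' Γ Δ
    · cases hS with
      | single cm =>
        rename_i Γ'
        have hm : Formula.bot ∈ Γ' := CM_mem cm (Multiset.mem_cons_self _ _)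
        rw [show Γ' = Formula.bot ::ₘ Γ'.erase .bot from (Multiset.cons_erase hm).symm]
        exact Deriv.botL G _ Δ
  | ew G Θ Λ d Γ Δ hp ih =>
    intro T hT
    rcases CS_plug_cases _ _ hT with ⟨G₂, hG, rfl⟩ | ⟨S', hS, rfl⟩
    · rcases CG_snoc_cases G hG with ⟨G', hG', rfl⟩ | ⟨Θ', cm, rfl⟩
      · exact Deriv.ew G' Θ Λ d Γ Δ (ih (CS_of_CG hG' _))
      · exact Deriv.ew G Θ' Λ d Γ Δ (ih (CS_plug (CS.single cm) G))
    · cases hS with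
      | single cm => exact Deriv.ew G _ Λ d _ Δ hp
  | impR G Γ Δ A B hp ih =>
    intro T hT
    rcases CS_plug_cases G _ hT with ⟨G', hG, rfl⟩ | ⟨S', hS, rfl⟩
    · exact Deriv.impR G' Γ Δ A B (ih (CS_of_CG hG _))
    · cases hS with
      | single cm =>
        exact Deriv.impR G _ Δ A B (ih (CS_plug (CS.single (CM_cons_left A cm)) G))
  | impL G Γ Δ A B h1 h2 ih1 ih2 =>
    intro T hT
    rcases CS_plug_cases G _ hT with ⟨G', hG, rfl⟩ | ⟨S', hS, rfl⟩
    · exact Deriv.impL G' Γ Δ A B (ih1 (CS_of_CG hG _)) (ih2 (CS_of_CG hG _))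
    · cases hS with
      | single cm =>
        rename_i Γ'
        have hm : A.imp B ∈ Γ' := CM_mem cm (Multiset.mem_cons_self _ _)
        have hY : Γ' = A.imp B ::ₘ Γ'.erase (A.imp B) := (Multiset.cons_erase hm).symm
        rw [hY]
        refine Deriv.impL G _ Δ A B ?_ ?_
        · have := ih1 (CS_plug (CS.single (CM_cons_left B cm)) G)
          rwa [hY] at this
        · have := ih2 (CS_plug (CS.single cm) G)
          rwa [hY] at this
  | boxR1 G Γ Δ Θ Λ A h1 h2 ih1 ih2 =>
    intro T hT
    rcases CS_plug_cases G _ hT with ⟨G', hG, rfl⟩ | ⟨S', hS, rfl⟩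
    · exact Deriv.boxR1 G' Γ Δ Θ Λ A (ih1 (CS_of_CG hG _)) (ih2 (CS_of_CG hG _))
    · cases hS with
      | dnHere cm =>
        exact Deriv.boxR1 G _ Δ Θ Λ A (ih1 (CS_plug (CS.dnHere cm) G))
          (ih2 (CS_plug (CS.dnHere cm) G))
      | dnThere hS' =>
        cases hS' with
        | single cm =>
          exact Deriv.boxR1 G Γ Δ _ Λ A (ih1 (CS_plug (CS.dnThere (CS.single cm)) G))
            (ih2 (CS_plug (CS.dnThere (CS.upHere cm)) G))
  | bboxR1 G Γ Δ Θ Λ A h1 h2 ih1 ih2 =>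
    intro T hT
    rcases CS_plug_cases G _ hT with ⟨G', hG, rfl⟩ | ⟨S', hS, rfl⟩
    · exact Deriv.bboxR1 G' Γ Δ Θ Λ A (ih1 (CS_of_CG hG _)) (ih2 (CS_of_CG hG _))
    · cases hS with
      | upHere cm =>
        exact Deriv.bboxR1 G _ Δ Θ Λ A (ih1 (CS_plug (CS.upHere cm) G))
          (ih2 (CS_plug (CS.upHere cm) G))
      | upThere hS' =>
        cases hS' with
        | single cm =>
          exact Deriv.bboxR1 G Γ Δ _ Λ A (ih1 (CS_plug (CS.upThere (CS.single cm)) G))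
            (ih2 (CS_plug (CS.upThere (CS.dnHere cm)) G))
  | boxR2 G Γ Δ A hd hp ih =>
    intro T hT
    rcases CS_plug_cases G _ hT with ⟨G', hG, rfl⟩ | ⟨S', hS, rfl⟩
    · exact Deriv.boxR2 G' Γ Δ A (by rw [lastDir_CG hG]; exact hd) (ih (CS_of_CG hG _))
    · cases hS with
      | single cm => exact Deriv.boxR2 G _ Δ A hd (ih (CS_plug (CS.upHere cm) G))
  | bboxR2 G Γ Δ A hd hp ih =>
    intro T hT
    rcases CS_plug_cases G _ hT with ⟨G', hG, rfl⟩ | ⟨S', hS, rfl⟩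
    · exact Deriv.bboxR2 G' Γ Δ A (by rw [lastDir_CG hG]; exact hd) (ih (CS_of_CG hG _))
    · cases hS with
      | single cm => exact Deriv.bboxR2 G _ Δ A hd (ih (CS_plug (CS.dnHere cm) G))
  | boxL1 G Γ Δ Θ Λ A hp ih =>
    intro T hT
    rcases CS_plug_cases G _ hT with ⟨G', hG, rfl⟩ | ⟨S', hS, rfl⟩
    · exact Deriv.boxL1 G' Γ Δ Θ Λ A (ih (CS_of_CG hG _))
    · cases hS with
      | upHere cm =>
        rename_i Γ'
        have hm : A.box ∈ Γ' := CM_mem cm (Multiset.mem_cons_self _ _)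
        have hY : Γ' = A.box ::ₘ Γ'.erase A.box := (Multiset.cons_erase hm).symm
        rw [hY]
        refine Deriv.boxL1 G _ Δ Θ Λ A ?_
        have := ih (CS_plug (CS.upHere cm) G)
        rwa [hY] at this
      | upThere hS' =>
        cases hS' with
        | single cm =>
          exact Deriv.boxL1 G Γ Δ _ Λ A
            (ih (CS_plug (CS.upThere (CS.single (CM_cons_left A cm))) G))
  | bboxL1 G Γ Δ Θ Λ A hp ih =>
    intro T hT
    rcases CS_plug_cases G _ hT with ⟨G', hG, rfl⟩ | ⟨S', hS, rfl⟩
    · exact Deriv.bboxL1 G' Γ Δ Θ Λ A (ih (CS_of_CG hG _))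
    · cases hS with
      | dnHere cm =>
        rename_i Γ'
        have hm : A.bbox ∈ Γ' := CM_mem cm (Multiset.mem_cons_self _ _)
        have hY : Γ' = A.bbox ::ₘ Γ'.erase A.bbox := (Multiset.cons_erase hm).symm
        rw [hY]
        refine Deriv.bboxL1 G _ Δ Θ Λ A ?_
        have := ih (CS_plug (CS.dnHere cm) G)
        rwa [hY] at this
      | dnThere hS' =>
        cases hS' with
        | single cm =>
          exact Deriv.bboxL1 G Γ Δ _ Λ A
            (ih (CS_plug (CS.dnThere (CS.single (CM_cons_left A cm))) G))
  | boxL2 G Γ Δ Θ Λ A hp ih =>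
    intro T hT
    rcases CS_plug_cases G _ hT with ⟨G', hG, rfl⟩ | ⟨S', hS, rfl⟩
    · exact Deriv.boxL2 G' Γ Δ Θ Λ A (ih (CS_of_CG hG _))
    · cases hS with
      | dnHere cm =>
        exact Deriv.boxL2 G _ Δ Θ Λ A (ih (CS_plug (CS.single (CM_cons_left A cm)) G))
      | dnThere hS' =>
        cases hS' with
        | single cm =>
          rename_i Θ'
          have hm : A.box ∈ Θ' := CM_mem cm (Multiset.mem_cons_self _ _)
          rw [show Θ' = A.box ::ₘ Θ'.erase A.box from (Multiset.cons_erase hm).symm]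
          exact Deriv.boxL2 G Γ Δ _ Λ A hp
  | bboxL2 G Γ Δ Θ Λ A hp ih =>
    intro T hT
    rcases CS_plug_cases G _ hT with ⟨G', hG, rfl⟩ | ⟨S', hS, rfl⟩
    · exact Deriv.bboxL2 G' Γ Δ Θ Λ A (ih (CS_of_CG hG _))
    · cases hS with
      | upHere cm =>
        exact Deriv.bboxL2 G _ Δ Θ Λ A (ih (CS_plug (CS.single (CM_cons_left A cm)) G))
      | upThere hS' =>
        cases hS' with
        | single cm =>
          rename_i Θ'
          have hm : A.bbox ∈ Θ' := CM_mem cm (Multiset.mem_cons_self _ _)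
          rw [show Θ' = A.bbox ::ₘ Θ'.erase A.bbox from (Multiset.cons_erase hm).symm]
          exact Deriv.bboxL2 G Γ Δ _ Λ A hp

theorem CS_withTail {Γ Γ' : Multiset Formula} (Δ : Multiset Formula) (H : TCtx)
    (cm : CM Γ Γ') : CS (withTail Γ Δ H) (withTail Γ' Δ H) := by
  cases H with
  | nil => exact CS.single cm
  | cons c H =>
    obtain ⟨d, Θ, Λ⟩ := c
    cases d
    · exact CS.upHere cm
    · exact CS.dnHere cm

/-- Admissibility of left contraction in LNS_Kt. -/
theorem contractionL_admissible (G : Ctx) (H : TCtx) (Γ Δ : Multiset Formula)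
    (A : Formula) (h : Deriv (plug G (withTail (A ::ₘ A ::ₘ Γ) Δ H))) :
    Deriv (plug G (withTail (A ::ₘ Γ) Δ H)) := by
  exact h.CS_closed (CS_plug (CS_withTail Δ H ⟨A, Γ, rfl, rfl⟩) G)
end

section
/- (Admissibility of right contraction in LNS_Kt) For all multisets Γ, Δ, every formula A, and all (possibly empty) contexts G, H: if G ⇗ Γ ⇒ Δ,A,A ⇗ H is derivable in LNS_Kt, then G ⇗ Γ ⇒ Δ,A ⇗ H is derivable in LNS_Kt (with the same structural connectives ⇗ ∈ {↗,↙} in both sequents). -/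
/-! ### Auxiliary development for contraction admissibility -/

/-- `CR S S'` : `S'` is `S` with one right-hand multiset contracted. -/
inductive CR : LNS → LNS → Prop
  | single (Γ Δ : Multiset Formula) (A : Formula) :
      CR (.single Γ (A ::ₘ A ::ₘ Δ)) (.single Γ (A ::ₘ Δ))
  | upHere (Γ Δ : Multiset Formula) (A : Formula) (S : LNS) :
      CR (.up Γ (A ::ₘ A ::ₘ Δ) S) (.up Γ (A ::ₘ Δ) S)
  | dnHere (Γ Δ : Multiset Formula) (A : Formula) (S : LNS) :
      CR (.dn Γ (A ::ₘ A ::ₘ Δ) S) (.dn Γ (A ::ₘ Δ) S)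
  | upThere (Γ Δ : Multiset Formula) (S S' : LNS) :
      CR S S' → CR (.up Γ Δ S) (.up Γ Δ S')
  | dnThere (Γ Δ : Multiset Formula) (S S' : LNS) :
      CR S S' → CR (.dn Γ Δ S) (.dn Γ Δ S')

lemma CR.single' {Γ Λ Λ' E : Multiset Formula} {C : Formula}
    (h1 : Λ = C ::ₘ C ::ₘ E) (h2 : Λ' = C ::ₘ E) :
    CR (.single Γ Λ) (.single Γ Λ') := by
  subst h1; subst h2; exact .single ..

lemma CR.upHere' {Γ Λ Λ' E : Multiset Formula} {C : Formula} {S : LNS}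
    (h1 : Λ = C ::ₘ C ::ₘ E) (h2 : Λ' = C ::ₘ E) :
    CR (.up Γ Λ S) (.up Γ Λ' S) := by
  subst h1; subst h2; exact .upHere ..

lemma CR.dnHere' {Γ Λ Λ' E : Multiset Formula} {C : Formula} {S : LNS}
    (h1 : Λ = C ::ₘ C ::ₘ E) (h2 : Λ' = C ::ₘ E) :
    CR (.dn Γ Λ S) (.dn Γ Λ' S) := by
  subst h1; subst h2; exact .dnHere ..

lemma crPlug (G : Ctx) {X X' : LNS} (h : CR X X') : CR (plug G X) (plug G X') := by
  induction G with
  | nil => exact h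
  | cons c G ih =>
    obtain ⟨Θ, Λ, d⟩ := c
    cases d
    · exact .upThere _ _ _ _ ih
    · exact .dnThere _ _ _ _ ih

/-- Contraction on the right somewhere inside a context. -/
inductive CtxCR : Ctx → Ctx → Prop
  | here (Θ Λ : Multiset Formula) (A : Formula) (d : Dir) (G : Ctx) :
      CtxCR ((Θ, A ::ₘ A ::ₘ Λ, d) :: G) ((Θ, A ::ₘ Λ, d) :: G)
  | there (c : Multiset Formula × Multiset Formula × Dir) {G G' : Ctx} :
      CtxCR G G' → CtxCR (c :: G) (c :: G')

lemma ctxcrPlug {G G' : Ctx} (h : CtxCR G G') (X : LNS) :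
    CR (plug G X) (plug G' X) := by
  induction h with
  | here Θ Λ A d G =>
    cases d
    · exact .upHere ..
    · exact .dnHere ..
  | there c h ih =>
    obtain ⟨Θ, Λ, d⟩ := c
    cases d
    · exact .upThere _ _ _ _ ih
    · exact .dnThere _ _ _ _ ih

lemma ctxcr_ne_nil {G G' : Ctx} (h : CtxCR G G') : G ≠ [] := by
  cases h <;> simp

lemma ctxcr_ne_nil' {G G' : Ctx} (h : CtxCR G G') : G' ≠ [] := by
  cases h <;> simp

lemma lastDir_cons (c : Multiset Formula × Multiset Formula × Dir) {G : Ctx}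
    (h : G ≠ []) : lastDir (c :: G) = lastDir G := by
  cases G with
  | nil => exact absurd rfl h
  | cons a G => rfl

lemma ctxcr_lastDir {G G' : Ctx} (h : CtxCR G G') : lastDir G' = lastDir G := by
  induction h with
  | here Θ Λ A d G => cases G <;> rfl
  | there c h ih =>
    rw [lastDir_cons c (ctxcr_ne_nil' h), lastDir_cons c (ctxcr_ne_nil h), ih]

lemma CR.single_inv {Γ Λ : Multiset Formula} {S' : LNS}
    (h : CR (.single Γ Λ) S') :
    ∃ C E, Λ = C ::ₘ C ::ₘ E ∧ S' = .single Γ (C ::ₘ E) := by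
  cases h; exact ⟨_, _, rfl, rfl⟩

lemma CR.up_inv {Γ Λ : Multiset Formula} {S S' : LNS} (h : CR (.up Γ Λ S) S') :
    (∃ C E, Λ = C ::ₘ C ::ₘ E ∧ S' = .up Γ (C ::ₘ E) S) ∨
    (∃ T, CR S T ∧ S' = .up Γ Λ T) := by
  cases h
  · exact Or.inl ⟨_, _, rfl, rfl⟩
  · exact Or.inr ⟨_, by assumption, rfl⟩

lemma CR.dn_inv {Γ Λ : Multiset Formula} {S S' : LNS} (h : CR (.dn Γ Λ S) S') :
    (∃ C E, Λ = C ::ₘ C ::ₘ E ∧ S' = .dn Γ (C ::ₘ E) S) ∨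
    (∃ T, CR S T ∧ S' = .dn Γ Λ T) := by
  cases h
  · exact Or.inl ⟨_, _, rfl, rfl⟩
  · exact Or.inr ⟨_, by assumption, rfl⟩

lemma splitCR : ∀ (G : Ctx) {X S' : LNS}, CR (plug G X) S' →
    (∃ G', CtxCR G G' ∧ S' = plug G' X) ∨ (∃ X', CR X X' ∧ S' = plug G X')
  | [], X, S', h => Or.inr ⟨S', h, rfl⟩
  | (Θ, Λ, Dir.up) :: G, X, S', h => by
    rcases CR.up_inv h with ⟨C, E, rfl, rfl⟩ | ⟨T, hT, rfl⟩
    · exact Or.inl ⟨(Θ, C ::ₘ E, Dir.up) :: G, .here .., rfl⟩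
    · rcases splitCR G hT with ⟨G', hG, rfl⟩ | ⟨X', hX, rfl⟩
      · exact Or.inl ⟨(Θ, Λ, Dir.up) :: G', .there _ hG, rfl⟩
      · exact Or.inr ⟨X', hX, rfl⟩
  | (Θ, Λ, Dir.dn) :: G, X, S', h => by
    rcases CR.dn_inv h with ⟨C, E, rfl, rfl⟩ | ⟨T, hT, rfl⟩
    · exact Or.inl ⟨(Θ, C ::ₘ E, Dir.dn) :: G, .here .., rfl⟩
    · rcases splitCR G hT with ⟨G', hG, rfl⟩ | ⟨X', hX, rfl⟩
      · exact Or.inl ⟨(Θ, Λ, Dir.dn) :: G', .there _ hG, rfl⟩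
      · exact Or.inr ⟨X', hX, rfl⟩

lemma ctxcr_snoc {G : Ctx} {Θ Λ : Multiset Formula} {d : Dir} {G' : Ctx}
    (h : CtxCR (G ++ [(Θ, Λ, d)]) G') :
    (∃ G₂, CtxCR G G₂ ∧ G' = G₂ ++ [(Θ, Λ, d)]) ∨
    (∃ C Λ₂, Λ = C ::ₘ C ::ₘ Λ₂ ∧ G' = G ++ [(Θ, C ::ₘ Λ₂, d)]) := by
  induction G generalizing G' with
  | nil =>
    cases h with
    | here Θ₀ Λ₀ A d₀ G₀ => exact Or.inr ⟨A, Λ₀, rfl, rfl⟩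
    | there c' h' => exact absurd rfl (ctxcr_ne_nil h')
  | cons a G ih =>
    cases h with
    | here Θ₀ Λ₀ A d₀ G₀ => exact Or.inl ⟨(Θ₀, A ::ₘ Λ₀, d₀) :: G, .here .., rfl⟩
    | there c' h' =>
      rcases ih h' with ⟨G₂, h₂, rfl⟩ | ⟨C, Λ₂, rfl, rfl⟩
      · exact Or.inl ⟨a :: G₂, .there _ h₂, rfl⟩
      · exact Or.inr ⟨C, Λ₂, rfl, rfl⟩

lemma cons_rot3 (a b : Formula) (s : Multiset Formula) :
    a ::ₘ b ::ₘ b ::ₘ s = b ::ₘ b ::ₘ a ::ₘ s := by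
  rw [Multiset.cons_swap a b, Multiset.cons_swap a b]

lemma exists_head {X C : Formula} {Δ E : Multiset Formula}
    (h : X ::ₘ Δ = C ::ₘ C ::ₘ E) : ∃ Δ', X ::ₘ Δ' = C ::ₘ E := by
  by_cases hXC : X = C
  · exact ⟨E, by rw [hXC]⟩
  · have hmem : X ∈ C ::ₘ C ::ₘ E := h ▸ Multiset.mem_cons_self X Δ
    have hx : X ∈ E := by simpa [hXC] using hmem
    obtain ⟨E', rfl⟩ := Multiset.exists_cons_of_mem hx
    exact ⟨C ::ₘ E', by rw [Multiset.cons_swap]⟩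

lemma crDeriv {S : LNS} (h : Deriv S) : ∀ {S' : LNS}, CR S S' → Deriv S' := by
  induction h with
  | id G Γ Δ p =>
    intro S' hcr
    rcases splitCR G hcr with ⟨G', hG, rfl⟩ | ⟨X', hX, rfl⟩
    · exact .id G' Γ Δ p
    · obtain ⟨C, E, hΛ, rfl⟩ := hX.single_inv
      obtain ⟨Δ', h2⟩ := exists_head hΛ
      rw [← h2]
      exact .id G Γ Δ' p
  | botL G Γ Δ =>
    intro S' hcr
    rcases splitCR G hcr with ⟨G', hG, rfl⟩ | ⟨X', hX, rfl⟩
    · exact .botL G' Γ Δ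
    · obtain ⟨C, E, hΛ, rfl⟩ := hX.single_inv
      exact .botL G Γ (C ::ₘ E)
  | ew G Θ Λ d Γ Δ hp ih =>
    intro S' hcr
    rcases splitCR (G ++ [(Θ, Λ, d)]) hcr with ⟨G', hG, rfl⟩ | ⟨X', hX, rfl⟩
    · rcases ctxcr_snoc hG with ⟨G₂, h₂, rfl⟩ | ⟨C, Λ₂, hΛ, rfl⟩
      · exact .ew G₂ Θ Λ d Γ Δ (ih (ctxcrPlug h₂ _))
      · exact .ew G Θ (C ::ₘ Λ₂) d Γ Δ (ih (crPlug G (CR.single' hΛ rfl)))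
    · obtain ⟨C, E, hΔ, rfl⟩ := hX.single_inv
      exact .ew G Θ Λ d Γ (C ::ₘ E) hp
  | impR G Γ Δ A B hp ih =>
    intro S' hcr
    rcases splitCR G hcr with ⟨G', hG, rfl⟩ | ⟨X', hX, rfl⟩
    · exact .impR G' Γ Δ A B (ih (ctxcrPlug hG _))
    · obtain ⟨C, E, hΛ, rfl⟩ := hX.single_inv
      obtain ⟨Δ', h2⟩ := exists_head hΛ
      rw [← h2]
      refine .impR G Γ Δ' A B (ih (crPlug G (CR.single' (C := C) (E := B ::ₘ E) ?_ ?_)))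
      · rw [hΛ, cons_rot3]
      · rw [h2, Multiset.cons_swap]
  | impL G Γ Δ A B hp1 hp2 ih1 ih2 =>
    intro S' hcr
    rcases splitCR G hcr with ⟨G', hG, rfl⟩ | ⟨X', hX, rfl⟩
    · exact .impL G' Γ Δ A B (ih1 (ctxcrPlug hG _)) (ih2 (ctxcrPlug hG _))
    · obtain ⟨C, E, rfl, rfl⟩ := hX.single_inv
      refine .impL G Γ (C ::ₘ E) A B (ih1 (crPlug G (CR.single ..)))
        (ih2 (crPlug G (CR.single' (C := C) (E := A ::ₘ E) (cons_rot3 ..) (Multiset.cons_swap ..))))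
  | boxR1 G Γ Δ Θ Λ A hp1 hp2 ih1 ih2 =>
    intro S' hcr
    rcases splitCR G hcr with ⟨G', hG, rfl⟩ | ⟨X', hX, rfl⟩
    · exact .boxR1 G' Γ Δ Θ Λ A (ih1 (ctxcrPlug hG _)) (ih2 (ctxcrPlug hG _))
    · rcases hX.dn_inv with ⟨C, E, rfl, rfl⟩ | ⟨T, hT, rfl⟩
      · refine .boxR1 G Γ (C ::ₘ E) Θ Λ A
          (ih1 (crPlug G (CR.dnHere' (C := C) (E := A ::ₘ E) (cons_rot3 ..) (Multiset.cons_swap ..))))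
          (ih2 (crPlug G (CR.dnHere ..)))
      · obtain ⟨C, E, hΛ, rfl⟩ := hT.single_inv
        obtain ⟨Λ', h2⟩ := exists_head hΛ
        rw [← h2]
        exact .boxR1 G Γ Δ Θ Λ' A
          (ih1 (crPlug G (CR.dnThere _ _ _ _ (CR.single' hΛ h2))))
          (ih2 (crPlug G (CR.dnThere _ _ _ _ (CR.upHere' hΛ h2))))
  | bboxR1 G Γ Δ Θ Λ A hp1 hp2 ih1 ih2 =>
    intro S' hcr
    rcases splitCR G hcr with ⟨G', hG, rfl⟩ | ⟨X', hX, rfl⟩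
    · exact .bboxR1 G' Γ Δ Θ Λ A (ih1 (ctxcrPlug hG _)) (ih2 (ctxcrPlug hG _))
    · rcases hX.up_inv with ⟨C, E, rfl, rfl⟩ | ⟨T, hT, rfl⟩
      · refine .bboxR1 G Γ (C ::ₘ E) Θ Λ A
          (ih1 (crPlug G (CR.upHere' (C := C) (E := A ::ₘ E) (cons_rot3 ..) (Multiset.cons_swap ..))))
          (ih2 (crPlug G (CR.upHere ..)))
      · obtain ⟨C, E, hΛ, rfl⟩ := hT.single_inv
        obtain ⟨Λ', h2⟩ := exists_head hΛ
        rw [← h2]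
        exact .bboxR1 G Γ Δ Θ Λ' A
          (ih1 (crPlug G (CR.upThere _ _ _ _ (CR.single' hΛ h2))))
          (ih2 (crPlug G (CR.upThere _ _ _ _ (CR.dnHere' hΛ h2))))
  | boxR2 G Γ Δ A hside hp ih =>
    intro S' hcr
    rcases splitCR G hcr with ⟨G', hG, rfl⟩ | ⟨X', hX, rfl⟩
    · exact .boxR2 G' Γ Δ A (by rw [ctxcr_lastDir hG]; exact hside) (ih (ctxcrPlug hG _))
    · obtain ⟨C, E, hΛ, rfl⟩ := hX.single_inv
      obtain ⟨Δ', h2⟩ := exists_head hΛ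
      rw [← h2]
      exact .boxR2 G Γ Δ' A hside (ih (crPlug G (CR.upHere' hΛ h2)))
  | bboxR2 G Γ Δ A hside hp ih =>
    intro S' hcr
    rcases splitCR G hcr with ⟨G', hG, rfl⟩ | ⟨X', hX, rfl⟩
    · exact .bboxR2 G' Γ Δ A (by rw [ctxcr_lastDir hG]; exact hside) (ih (ctxcrPlug hG _))
    · obtain ⟨C, E, hΛ, rfl⟩ := hX.single_inv
      obtain ⟨Δ', h2⟩ := exists_head hΛ
      rw [← h2]
      exact .bboxR2 G Γ Δ' A hside (ih (crPlug G (CR.dnHere' hΛ h2)))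
  | boxL1 G Γ Δ Θ Λ A hp ih =>
    intro S' hcr
    rcases splitCR G hcr with ⟨G', hG, rfl⟩ | ⟨X', hX, rfl⟩
    · exact .boxL1 G' Γ Δ Θ Λ A (ih (ctxcrPlug hG _))
    · rcases hX.up_inv with ⟨C, E, rfl, rfl⟩ | ⟨T, hT, rfl⟩
      · exact .boxL1 G Γ (C ::ₘ E) Θ Λ A (ih (crPlug G (CR.upHere ..)))
      · obtain ⟨C, E, rfl, rfl⟩ := hT.single_inv
        exact .boxL1 G Γ Δ Θ (C ::ₘ E) A
          (ih (crPlug G (CR.upThere _ _ _ _ (CR.single ..))))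
  | bboxL1 G Γ Δ Θ Λ A hp ih =>
    intro S' hcr
    rcases splitCR G hcr with ⟨G', hG, rfl⟩ | ⟨X', hX, rfl⟩
    · exact .bboxL1 G' Γ Δ Θ Λ A (ih (ctxcrPlug hG _))
    · rcases hX.dn_inv with ⟨C, E, rfl, rfl⟩ | ⟨T, hT, rfl⟩
      · exact .bboxL1 G Γ (C ::ₘ E) Θ Λ A (ih (crPlug G (CR.dnHere ..)))
      · obtain ⟨C, E, rfl, rfl⟩ := hT.single_inv
        exact .bboxL1 G Γ Δ Θ (C ::ₘ E) A
          (ih (crPlug G (CR.dnThere _ _ _ _ (CR.single ..))))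
  | boxL2 G Γ Δ Θ Λ A hp ih =>
    intro S' hcr
    rcases splitCR G hcr with ⟨G', hG, rfl⟩ | ⟨X', hX, rfl⟩
    · exact .boxL2 G' Γ Δ Θ Λ A (ih (ctxcrPlug hG _))
    · rcases hX.dn_inv with ⟨C, E, rfl, rfl⟩ | ⟨T, hT, rfl⟩
      · exact .boxL2 G Γ (C ::ₘ E) Θ Λ A (ih (crPlug G (CR.single ..)))
      · obtain ⟨C, E, rfl, rfl⟩ := hT.single_inv
        exact .boxL2 G Γ Δ Θ (C ::ₘ E) A hp
  | bboxL2 G Γ Δ Θ Λ A hp ih =>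
    intro S' hcr
    rcases splitCR G hcr with ⟨G', hG, rfl⟩ | ⟨X', hX, rfl⟩
    · exact .bboxL2 G' Γ Δ Θ Λ A (ih (ctxcrPlug hG _))
    · rcases hX.up_inv with ⟨C, E, rfl, rfl⟩ | ⟨T, hT, rfl⟩
      · exact .bboxL2 G Γ (C ::ₘ E) Θ Λ A (ih (crPlug G (CR.single ..)))
      · obtain ⟨C, E, rfl, rfl⟩ := hT.single_inv
        exact .bboxL2 G Γ Δ Θ (C ::ₘ E) A hp

/-- Admissibility of right contraction in LNS_Kt. -/
theorem contractionR_admissible (G : Ctx) (H : TCtx) (Γ Δ : Multiset Formula)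
    (A : Formula) (h : Deriv (plug G (withTail Γ (A ::ₘ A ::ₘ Δ) H))) :
    Deriv (plug G (withTail Γ (A ::ₘ Δ) H)) := by
  refine crDeriv h (crPlug G ?_)
  cases H with
  | nil => exact .single ..
  | cons p H =>
    obtain ⟨d, Θ, Λ⟩ := p
    cases d
    · exact .upHere ..
    · exact .dnHere ..
end
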